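/- arXiv:2012.11499 — 4 statements merged into one kernel-verified Lean document; each statement's English description precedes it below -/
import Mathlib

section
/- Let γ ∈ (0,1) and G ⊆ G_γ, and let ψ be a tame strong solution of DHW_G. Then ‖ψ(z)‖_G = ‖ψ(0)‖_G for all z ∈ ℝ. -/
noncomputable section

open scoped RealInnerProductSpace BigOperators
open Real

/-- `ℝ^d` with the Euclidean structure. -/
abbrev V (d : ℕ) : Type := EuclideanSpace ℝ (Fin d)

/-- `Λ` is a full-rank lattice: the set of integer linear combinations of some
basis of `ℝ^d`. -/
def IsLattice {d : ℕ} (Λ : Set (V d)) : Prop :=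
  ∃ b : Module.Basis (Fin d) ℝ (V d),
    Λ = {x : V d | ∃ c : Fin d → ℤ, x = ∑ i, (c i : ℝ) • b i}

/-- The vector `ν = (0,…,0,1)`. -/
def nu (d : ℕ) (hd : 0 < d) : V d :=
  EuclideanSpace.single ⟨d - 1, Nat.sub_lt hd Nat.one_pos⟩ (1 : ℝ)

/-- `ρ_g = (k₀+g)·ν`. -/
def rho {d : ℕ} (k₀ ν g : V d) : ℝ := ⟪k₀ + g, ν⟫

/-- `σ_g = |k₀|² - |k₀+g|²`. -/
def sig {d : ℕ} (k₀ g : V d) : ℝ := ‖k₀‖ ^ 2 - ‖k₀ + g‖ ^ 2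

/-- `G_γ = {g ∈ Λ : ρ_g ≥ γ·ρ₀}`. -/
def Gset {d : ℕ} (Λ : Set (V d)) (k₀ ν : V d) (γ : ℝ) : Set (V d) :=
  {g ∈ Λ | γ * ⟪k₀, ν⟫ ≤ rho k₀ ν g}

/-- `G^M = {g ∈ Λ : |g| ≤ M}`. -/
def GMball {d : ℕ} (Λ : Set (V d)) (M : ℝ) : Set (V d) := {g ∈ Λ | ‖g‖ ≤ M}

/-- `𝔖_m(β) = Σ_{κ∈Λ} |κ|^m·exp(-β·|κ|)`. -/
def Sm {d : ℕ} (Λ : Set (V d)) (m : ℕ) (β : ℝ) : ℝ :=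
  ∑' κ : Λ, ‖(κ : V d)‖ ^ m * Real.exp (-β * ‖(κ : V d)‖)

/-- The norm `‖φ‖_G` of `ℋ(G)`. -/
def normOn {d : ℕ} (k₀ ν : V d) (G : Set (V d)) (φ : V d → ℂ) : ℝ :=
  Real.sqrt (∑' g : G, rho k₀ ν (g : V d) * ‖φ (g : V d)‖ ^ 2)

/-- The exponentially weighted norm `‖φ‖_α`. -/
def normA {d : ℕ} (k₀ ν : V d) (G : Set (V d)) (α : ℝ) (φ : V d → ℂ) : ℝ :=
  Real.sqrt (∑' g : G,
    Real.exp (2 * α * ‖(g : V d)‖) * rho k₀ ν (g : V d) * ‖φ (g : V d)‖ ^ 2)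

/-- `φ|_G` is a member of `ℋ(G)`, i.e. `‖φ‖_G² < ∞`. -/
def MemH {d : ℕ} (k₀ ν : V d) (G : Set (V d)) (φ : V d → ℂ) : Prop :=
  Summable fun g : G => rho k₀ ν (g : V d) * ‖φ (g : V d)‖ ^ 2

/-- The DHW equations on the beam set `G`:
`(ρ_g/π)·ψ_g′(z) = i(σ_g ψ_g(z) + Σ_{h∈G} U(g-h) ψ_h(z))` for `g ∈ G`,
including summability of the interaction sum. -/
def SatDHW {d : ℕ} (k₀ ν : V d) (U : V d → ℂ) (G : Set (V d)) (ψ : ℝ → V d → ℂ) : Prop :=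
  ∀ z : ℝ, ∀ g ∈ G,
    Summable (fun h : G => U (g - (h : V d)) * ψ z (h : V d)) ∧
    HasDerivAt (fun w => ψ w g)
      (((π / rho k₀ ν g : ℝ) : ℂ) * (Complex.I *
        (((sig k₀ g : ℝ) : ℂ) * ψ z g +
          ∑' h : G, U (g - (h : V d)) * ψ z (h : V d)))) z

/-- `z ↦ (w(g)·ψ_g(z))_{g∈G}` is a differentiable curve in `ℋ(G)`, encoded by
the weighted embedding `g ↦ w(g)·√ρ_g·ψ_g(z)` into `ℓ²(G)`. -/
def CurveDiff {d : ℕ} (k₀ ν : V d) (G : Set (V d)) (w : V d → ℝ) (ψ : ℝ → V d → ℂ) : Prop :=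
  ∃ A : ℝ → lp (fun _ : G => ℂ) 2, Differentiable ℝ A ∧
    ∀ (z : ℝ) (g : G),
      A z g = ((w (g : V d) * Real.sqrt (rho k₀ ν (g : V d)) : ℝ) : ℂ) * ψ z (g : V d)

/-- Tame strong solution of `DHW_G`. -/
def IsTameSol {d : ℕ} (k₀ ν : V d) (U : V d → ℂ) (G : Set (V d)) (ψ : ℝ → V d → ℂ) : Prop :=
  SatDHW k₀ ν U G ψ ∧ CurveDiff k₀ ν G (fun _ => 1) ψ ∧
  ∀ z : ℝ,
    Summable (fun g : G => |sig k₀ (g : V d)| * ‖ψ z (g : V d)‖ ^ 2) ∧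
    Summable (fun q : G × G =>
      ‖U ((q.1 : V d) - (q.2 : V d))‖ * ‖ψ z (q.2 : V d)‖ * ‖ψ z (q.1 : V d)‖)

/-- `α`-tame strong solution of `DHW_G`. -/
def IsAlphaTameSol {d : ℕ} (k₀ ν : V d) (U : V d → ℂ) (G : Set (V d)) (α : ℝ)
    (ψ : ℝ → V d → ℂ) : Prop :=
  SatDHW k₀ ν U G ψ ∧ CurveDiff k₀ ν G (fun _ => 1) ψ ∧
  CurveDiff k₀ ν G (fun g => Real.exp (α * ‖g‖)) ψ ∧
  ∀ z : ℝ,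
    Summable (fun g : G =>
      Real.exp (2 * α * ‖(g : V d)‖) * |sig k₀ (g : V d)| * ‖ψ z (g : V d)‖ ^ 2) ∧
    Summable (fun q : G × G =>
      Real.exp (α * ‖(q.1 : V d)‖ + α * ‖(q.2 : V d)‖) *
        ‖U ((q.1 : V d) - (q.2 : V d))‖ * ‖ψ z (q.2 : V d)‖ * ‖ψ z (q.1 : V d)‖)

open Classical in
/-- Initial condition `ψ(0) = δ` on `G`. -/
def InitDelta {d : ℕ} (G : Set (V d)) (ψ : ℝ → V d → ℂ) : Prop :=
  ∀ g ∈ G, ψ 0 g = if g = (0 : V d) then 1 else 0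

namespace Stmt1Aux

lemma lattice_sub {d : ℕ} {Λ : Set (V d)} (hΛ : IsLattice Λ) {x y : V d}
    (hx : x ∈ Λ) (hy : y ∈ Λ) : x - y ∈ Λ := by
  obtain ⟨b, rfl⟩ := hΛ
  obtain ⟨c, rfl⟩ := hx
  obtain ⟨c', rfl⟩ := hy
  refine ⟨c - c', ?_⟩
  simp [Pi.sub_apply, sub_smul, Finset.sum_sub_distrib]

/-- Evaluation at a coordinate as a continuous `ℝ`-linear map on `ℓ²`. -/
def evalCLM {ι : Type*} (g : ι) : lp (fun _ : ι => ℂ) 2 →L[ℝ] ℂ :=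
  LinearMap.mkContinuous
    { toFun := fun f => f g
      map_add' := fun f h => by
        have := lp.coeFn_add f h
        exact congrFun this g
      map_smul' := fun c f => by
        have := lp.coeFn_smul c f
        simpa using congrFun this g }
    1 (fun f => by show ‖f g‖ ≤ 1 * ‖f‖; simpa using lp.norm_apply_le_norm two_ne_zero f g)

@[simp] lemma evalCLM_apply {ι : Type*} (g : ι) (f : lp (fun _ : ι => ℂ) 2) :
    evalCLM g f = f g := rfl

end Stmt1Aux

open Stmt1Aux in
set_option maxHeartbeats 1000000 in
/-- norm conservation for tame strong solutions:
for `γ ∈ (0,1)`, `G ⊆ G_γ` and a tame strong solution `ψ` of `DHW_G`,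
`‖ψ(z)‖_G = ‖ψ(0)‖_G` for all `z ∈ ℝ`. -/
theorem stmt1 {d : ℕ} (hd : 0 < d) (Λ : Set (V d)) (hΛ : IsLattice Λ)
    (k₀ : V d) (hk : 0 < ⟪k₀, nu d hd⟫)
    (U : V d → ℂ) (hUsym : ∀ g ∈ Λ, U (-g) = starRingEnd ℂ (U g))
    (CU αU : ℝ) (hCU : 0 < CU) (hαU : 0 < αU)
    (hUbd : ∀ g ∈ Λ, ‖U g‖ ≤ CU * Real.exp (-αU * ‖g‖))
    (γ : ℝ) (hγ : γ ∈ Set.Ioo (0 : ℝ) 1)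
    (G : Set (V d)) (hG : G ⊆ Gset Λ k₀ (nu d hd) γ)
    (ψ : ℝ → V d → ℂ) (hψ : IsTameSol k₀ (nu d hd) U G ψ) :
    ∀ z : ℝ, normOn k₀ (nu d hd) G (ψ z) = normOn k₀ (nu d hd) G (ψ 0) := by
  set ν := nu d hd with hνdef
  obtain ⟨hDHW, ⟨A, hAdiff, hAval⟩, htame⟩ := hψ
  have hρpos : ∀ g : G, 0 < rho k₀ ν (g : V d) := fun g =>
    lt_of_lt_of_le (mul_pos hγ.1 hk) (hG g.2).2
  -- the squared norm as the real part of the `ℓ²` inner product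
  have hterm_norm : ∀ (w : ℝ) (g : G),
      ((inner ℂ (A w g) (A w g) : ℂ)).re = rho k₀ ν (g : V d) * ‖ψ w (g : V d)‖ ^ 2 := by
    intro w g
    rw [RCLike.inner_apply', mul_comm, Complex.mul_conj]
    rw [hAval w g]
    simp only [one_mul, Complex.ofReal_re, Complex.normSq_mul, Complex.normSq_ofReal]
    rw [Complex.normSq_eq_norm_sq]
    rw [Real.mul_self_sqrt (hρpos g).le]
  have hnorm : ∀ w : ℝ, normOn k₀ ν G (ψ w)
      = Real.sqrt ((inner ℂ (A w) (A w) : ℂ).re) := by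
    intro w
    unfold normOn
    congr 1
    rw [lp.inner_eq_tsum, Complex.re_tsum (lp.summable_inner (A w) (A w))]
    exact tsum_congr fun g => (hterm_norm w g).symm
  -- the derivative of the squared norm vanishes
  have key : ∀ z : ℝ, HasDerivAt (fun w => (inner ℂ (A w) (A w) : ℂ).re) 0 z := by
    intro z
    have hA' : HasDerivAt A (deriv A z) z := (hAdiff z).hasDerivAt
    -- identify the coordinates of the derivative
    have hcomp : ∀ g : G, deriv A z g
        = ((1 * Real.sqrt (rho k₀ ν (g : V d)) : ℝ) : ℂ) *
          (((π / rho k₀ ν (g : V d) : ℝ) : ℂ) * (Complex.I *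
            (((sig k₀ (g : V d) : ℝ) : ℂ) * ψ z (g : V d) +
              ∑' h : G, U ((g : V d) - (h : V d)) * ψ z (h : V d)))) := by
      intro g
      have h1 : HasDerivAt (fun w => A w g) (deriv A z g) z :=
        (evalCLM g).hasFDerivAt.comp_hasDerivAt z hA'
      have h2 : HasDerivAt (fun w => A w g)
          (((1 * Real.sqrt (rho k₀ ν (g : V d)) : ℝ) : ℂ) *
            (((π / rho k₀ ν (g : V d) : ℝ) : ℂ) * (Complex.I *
              (((sig k₀ (g : V d) : ℝ) : ℂ) * ψ z (g : V d) +
                ∑' h : G, U ((g : V d) - (h : V d)) * ψ z (h : V d))))) z := by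
        have heq : (fun w => A w g)
            = fun w => ((1 * Real.sqrt (rho k₀ ν (g : V d)) : ℝ) : ℂ) * ψ w (g : V d) :=
          funext fun w => hAval w g
        rw [heq]
        exact ((hDHW z (g : V d) g.2).2).const_mul _
      exact h1.unique h2
    -- notation for the interaction sums
    set S : G → ℂ := fun g => ∑' h : G, U ((g : V d) - (h : V d)) * ψ z (h : V d) with hSdef
    -- the per-coordinate term of ⟪A', A z⟫
    have hterm : ∀ g : G, (inner ℂ (deriv A z g) (A z g) : ℂ)
        = -(π : ℂ) * Complex.I *
            (((sig k₀ (g : V d) * ‖ψ z (g : V d)‖ ^ 2 : ℝ) : ℂ) +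
              (starRingEnd ℂ) (S g) * ψ z (g : V d)) := by
      intro g
      rw [RCLike.inner_apply', hcomp g, hAval z g]
      have hρ := hρpos g
      have hnsq : (starRingEnd ℂ) (ψ z (g : V d)) * ψ z (g : V d)
          = ((‖ψ z (g : V d)‖ ^ 2 : ℝ) : ℂ) := by
        rw [mul_comm, Complex.mul_conj, Complex.normSq_eq_norm_sq]
      have hc : ((Real.sqrt (rho k₀ ν (g : V d)) : ℝ) : ℂ) *
          ((Real.sqrt (rho k₀ ν (g : V d)) : ℝ) : ℂ) * ((π / rho k₀ ν (g : V d) : ℝ) : ℂ)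
          = (π : ℂ) := by
        rw [← Complex.ofReal_mul, Real.mul_self_sqrt hρ.le, ← Complex.ofReal_mul]
        congr 1
        field_simp
      rw [show ((sig k₀ (g : V d) * ‖ψ z (g : V d)‖ ^ 2 : ℝ) : ℂ)
          = ((sig k₀ (g : V d) : ℝ) : ℂ) * ((starRingEnd ℂ) (ψ z (g : V d)) * ψ z (g : V d))
          from by rw [hnsq]; push_cast; ring]
      simp only [map_mul, map_add, Complex.conj_I, Complex.conj_ofReal,
        Complex.ofReal_mul, Complex.ofReal_one, one_mul]
      linear_combination (-Complex.I * (((sig k₀ (g : V d) : ℝ) : ℂ) *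
        ((starRingEnd ℂ) (ψ z (g : V d)) * ψ z (g : V d)) +
        (starRingEnd ℂ) (S g) * ψ z (g : V d))) * hc
    -- summability facts
    have hs1 : Summable (fun g : G => sig k₀ (g : V d) * ‖ψ z (g : V d)‖ ^ 2) := by
      refine Summable.of_abs ?_
      have := (htame z).1
      refine this.congr fun g => ?_
      rw [abs_mul, abs_of_nonneg (by positivity : (0:ℝ) ≤ ‖ψ z (g : V d)‖ ^ 2)]
    set F : G × G → ℂ := fun q =>
      (starRingEnd ℂ) (U ((q.1 : V d) - (q.2 : V d)) * ψ z (q.2 : V d)) * ψ z (q.1 : V d)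
      with hFdef
    have hFnorm : Summable (fun q : G × G => ‖F q‖) := by
      refine ((htame z).2).congr fun q => ?_
      simp [hFdef, norm_mul, mul_comm, mul_assoc, mul_left_comm]
    have hFsum : Summable F := hFnorm.of_norm
    have hrow : ∀ g : G, Summable fun h : G => F (g, h) := by
      intro g
      have h1 : Summable (fun h : G => U ((g : V d) - (h : V d)) * ψ z (h : V d)) :=
        (hDHW z (g : V d) g.2).1
      have h2 : Summable (fun h : G =>
          (starRingEnd ℂ) (U ((g : V d) - (h : V d)) * ψ z (h : V d))) :=
        h1.map (starRingEnd ℂ) Complex.continuous_conj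
      have h3 : Summable (fun h : G =>
          (starRingEnd ℂ) (U ((g : V d) - (h : V d)) * ψ z (h : V d)) * ψ z (g : V d)) :=
        h2.mul_right _
      exact h3
    have hF1 : ∀ g : G, (starRingEnd ℂ) (S g) * ψ z (g : V d) = ∑' h : G, F (g, h) := by
      intro g
      have hc : (starRingEnd ℂ) (S g)
          = ∑' h : G, (starRingEnd ℂ) (U ((g : V d) - (h : V d)) * ψ z (h : V d)) := by
        rw [hSdef]
        exact Complex.conjCLE.map_tsum
      rw [hc, ← tsum_mul_right]
    have hprodnn := (summable_prod_of_nonneg (f := fun q : G × G => ‖F q‖)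
      (fun q => norm_nonneg _)).mp hFnorm
    have hF1sum : Summable fun g : G => (starRingEnd ℂ) (S g) * ψ z (g : V d) := by
      refine Summable.of_norm_bounded hprodnn.2 fun g => ?_
      rw [hF1 g]
      exact norm_tsum_le_tsum_norm (hprodnn.1 g)
    -- the double sum is real
    have hswap : ∀ q : G × G, (starRingEnd ℂ) (F q) = F q.swap := by
      rintro ⟨g, h⟩
      have hgh : (g : V d) - (h : V d) ∈ Λ :=
        lattice_sub hΛ (hG g.2).1 (hG h.2).1
      have hU : U ((h : V d) - (g : V d)) = (starRingEnd ℂ) (U ((g : V d) - (h : V d))) := by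
        rw [← neg_sub]
        exact hUsym _ hgh
      simp only [hFdef, Prod.swap, map_mul, Complex.conj_conj, hU, map_mul, Complex.conj_conj]
      ring
    have hTreal : (starRingEnd ℂ) (∑' g : G, (starRingEnd ℂ) (S g) * ψ z (g : V d))
        = ∑' g : G, (starRingEnd ℂ) (S g) * ψ z (g : V d) := by
      have hT : (∑' g : G, (starRingEnd ℂ) (S g) * ψ z (g : V d)) = ∑' q : G × G, F q := by
        rw [Summable.tsum_prod' hFsum hrow]
        exact tsum_congr fun g => hF1 g
      rw [hT]
      calc (starRingEnd ℂ) (∑' q : G × G, F q)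
          = ∑' q : G × G, (starRingEnd ℂ) (F q) := Complex.conjCLE.map_tsum
        _ = ∑' q : G × G, F q.swap := tsum_congr hswap
        _ = ∑' q : G × G, F q := (Equiv.prodComm _ _).tsum_eq (f := F)
    -- the inner product ⟪A', A z⟫
    have hX : (inner ℂ (deriv A z) (A z) : ℂ)
        = -(π : ℂ) * Complex.I *
            (((∑' g : G, sig k₀ (g : V d) * ‖ψ z (g : V d)‖ ^ 2 : ℝ) : ℂ) +
              ∑' g : G, (starRingEnd ℂ) (S g) * ψ z (g : V d)) := by
      rw [lp.inner_eq_tsum]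
      rw [tsum_congr hterm, tsum_mul_left]
      congr 1
      have hs1C : Summable (fun g : G =>
          ((sig k₀ (g : V d) * ‖ψ z (g : V d)‖ ^ 2 : ℝ) : ℂ)) := by
        simpa [Function.comp_def, Complex.ofRealHom_eq_coe] using
          hs1.map (Complex.ofRealHom : ℝ →+* ℂ) Complex.continuous_ofReal
      rw [Summable.tsum_add hs1C hF1sum, Complex.ofReal_tsum]
    -- derivative of the inner product
    have hIP : HasDerivAt (fun w => (inner ℂ (A w) (A w) : ℂ))
        ((inner ℂ (A z) (deriv A z) : ℂ) + (inner ℂ (deriv A z) (A z) : ℂ)) z :=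
      HasDerivAt.inner (𝕜 := ℂ) hA' hA'
    have hval : ((inner ℂ (A z) (deriv A z) : ℂ) + (inner ℂ (deriv A z) (A z) : ℂ)) = 0 := by
      rw [← inner_conj_symm (𝕜 := ℂ) (A z) (deriv A z), hX]
      simp only [map_mul, map_neg, map_add, Complex.conj_I, Complex.conj_ofReal, hTreal]
      ring
    have hfinal := Complex.reCLM.hasFDerivAt.comp_hasDerivAt z hIP
    rw [hval] at hfinal
    exact hfinal.congr_deriv (by simp)
  have hdiff : Differentiable ℝ fun w => (inner ℂ (A w) (A w) : ℂ).re :=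
    fun z => (key z).differentiableAt
  have hconst := is_const_of_deriv_eq_zero hdiff (fun z => (key z).deriv)
  intro z
  rw [hnorm z, hnorm 0, hconst z 0]
end
end

section
/- Let γ ∈ (0,1) and M > 0 be such that G^M ⊆ G_γ (so 0 ∈ G^M), let s̃_* > 0, and set G^M_Ew := {g ∈ G^M : |σ_g|/(2ρ_g) < s̃_*} (which contains 0 since σ_0 = 0). Let ψ^M : ℝ → ℂ^{G^M} and ψ^M_Ew : ℝ → ℂ^{G^M_Ew} be the unique solutions of the finite systems DHW_{G^M} and DHW_{G^M_Ew}, respectively, with initial datum δ. Then for all z ∈ ℝ: ‖ψ^M_Ew(z) − ψ^M(z)|_{G^M_Ew}‖_{G^M_Ew} ≤ |z|·(π/s̃_*)·(C_U²·(𝔖₀(α_U)−1)·𝔖₀(α_U)/(γ²·ρ₀²))·√ρ₀. -/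
noncomputable section

open scoped RealInnerProductSpace BigOperators
open Real

namespace Stmt9Aux

lemma tsum_set_finite {X M : Type*} [AddCommMonoid M] [TopologicalSpace M] [T2Space M]
    {S : Set X} (hS : S.Finite) (f : X → M) :
    ∑' x : S, f (x : X) = ∑ x ∈ hS.toFinset, f x := by
  rw [tsum_subtype]
  rw [tsum_eq_sum (s := hS.toFinset)
    (fun x hx => Set.indicator_of_notMem (fun h => hx (hS.mem_toFinset.mpr h)) f)]
  exact Finset.sum_congr rfl fun x hx => Set.indicator_of_mem (hS.mem_toFinset.mp hx) f

lemma l2_tri {ι : Type*} (S : Finset ι) (a b : ι → ℝ) :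
    Real.sqrt (∑ i ∈ S, (a i + b i) ^ 2) ≤
      Real.sqrt (∑ i ∈ S, a i ^ 2) + Real.sqrt (∑ i ∈ S, b i ^ 2) := by
  have hA : (0:ℝ) ≤ ∑ i ∈ S, a i ^ 2 := Finset.sum_nonneg fun i _ => sq_nonneg _
  have hB : (0:ℝ) ≤ ∑ i ∈ S, b i ^ 2 := Finset.sum_nonneg fun i _ => sq_nonneg _
  have hcs : ∑ i ∈ S, a i * b i ≤ Real.sqrt (∑ i ∈ S, a i ^ 2) * Real.sqrt (∑ i ∈ S, b i ^ 2) := by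
    have h := Finset.sum_mul_sq_le_sq_mul_sq S a b
    have h2 : Real.sqrt ((∑ i ∈ S, a i * b i) ^ 2) ≤
        Real.sqrt ((∑ i ∈ S, a i ^ 2) * ∑ i ∈ S, b i ^ 2) := Real.sqrt_le_sqrt h
    rw [Real.sqrt_sq_eq_abs, Real.sqrt_mul hA] at h2
    exact le_trans (le_abs_self _) h2
  have key : ∑ i ∈ S, (a i + b i) ^ 2 ≤
      (Real.sqrt (∑ i ∈ S, a i ^ 2) + Real.sqrt (∑ i ∈ S, b i ^ 2)) ^ 2 := by
    have e : ∑ i ∈ S, (a i + b i) ^ 2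
        = ∑ i ∈ S, a i ^ 2 + 2 * (∑ i ∈ S, a i * b i) + ∑ i ∈ S, b i ^ 2 := by
      rw [Finset.mul_sum, ← Finset.sum_add_distrib, ← Finset.sum_add_distrib]
      exact Finset.sum_congr rfl fun i _ => by ring
    rw [e, add_sq, Real.sq_sqrt hA, Real.sq_sqrt hB]
    nlinarith [hcs]
  calc Real.sqrt (∑ i ∈ S, (a i + b i) ^ 2) ≤ Real.sqrt ((Real.sqrt (∑ i ∈ S, a i ^ 2) + Real.sqrt (∑ i ∈ S, b i ^ 2)) ^ 2) := Real.sqrt_le_sqrt key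
  _ = _ := Real.sqrt_sq (by positivity)

lemma schur {ι κ : Type*} (S : Finset ι) (T : Finset κ) (a : ι → κ → ℝ) (x : κ → ℝ)
    (ha : ∀ g ∈ S, ∀ h ∈ T, 0 ≤ a g h) (hx : ∀ h ∈ T, 0 ≤ x h)
    (Ca Cb : ℝ) (hCa : 0 ≤ Ca) (hCb : 0 ≤ Cb)
    (hrow : ∀ g ∈ S, ∑ h ∈ T, a g h ≤ Ca) (hcol : ∀ h ∈ T, ∑ g ∈ S, a g h ≤ Cb) :
    ∑ g ∈ S, (∑ h ∈ T, a g h * x h) ^ 2 ≤ Ca * Cb * ∑ h ∈ T, x h ^ 2 := by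
  have step1 : ∀ g ∈ S, (∑ h ∈ T, a g h * x h) ^ 2 ≤ Ca * ∑ h ∈ T, a g h * x h ^ 2 := by
    intro g hg
    have hcs := Finset.sum_mul_sq_le_sq_mul_sq T (fun h => Real.sqrt (a g h))
      (fun h => Real.sqrt (a g h) * x h)
    have e1 : ∀ h ∈ T, Real.sqrt (a g h) * (Real.sqrt (a g h) * x h) = a g h * x h := by
      intro h hT; rw [← mul_assoc, Real.mul_self_sqrt (ha g hg h hT)]
    have e2 : ∀ h ∈ T, Real.sqrt (a g h) ^ 2 = a g h := fun h hT => Real.sq_sqrt (ha g hg h hT)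
    have e3 : ∀ h ∈ T, (Real.sqrt (a g h) * x h) ^ 2 = a g h * x h ^ 2 := by
      intro h hT; rw [mul_pow, Real.sq_sqrt (ha g hg h hT)]
    rw [Finset.sum_congr rfl e1, Finset.sum_congr rfl e2, Finset.sum_congr rfl e3] at hcs
    calc (∑ h ∈ T, a g h * x h) ^ 2 ≤ (∑ h ∈ T, a g h) * ∑ h ∈ T, a g h * x h ^ 2 := hcs
      _ ≤ Ca * ∑ h ∈ T, a g h * x h ^ 2 := by
          apply mul_le_mul_of_nonneg_right (hrow g hg)
          exact Finset.sum_nonneg fun h hT => mul_nonneg (ha g hg h hT) (sq_nonneg _)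
  calc ∑ g ∈ S, (∑ h ∈ T, a g h * x h) ^ 2 ≤ ∑ g ∈ S, Ca * ∑ h ∈ T, a g h * x h ^ 2 :=
        Finset.sum_le_sum step1
    _ = Ca * ∑ h ∈ T, (∑ g ∈ S, a g h) * x h ^ 2 := by
        rw [← Finset.mul_sum, Finset.sum_comm]
        congr 1; exact Finset.sum_congr rfl fun h _ => by rw [Finset.sum_mul]
    _ ≤ Ca * ∑ h ∈ T, Cb * x h ^ 2 := by
        apply mul_le_mul_of_nonneg_left _ hCa
        exact Finset.sum_le_sum fun h hT => mul_le_mul_of_nonneg_right (hcol h hT) (sq_nonneg _)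
    _ = Ca * Cb * ∑ h ∈ T, x h ^ 2 := by rw [← Finset.mul_sum, mul_assoc]



lemma hasDerivAt_normSq (f : ℝ → ℂ) (f' : ℂ) (z : ℝ) (hf : HasDerivAt f f' z) :
    HasDerivAt (fun w => ‖f w‖ ^ 2) (2 * ((starRingEnd ℂ) (f z) * f').re) z := by
  have hre : HasDerivAt (fun w => (f w).re) f'.re z :=
    (Complex.reCLM.hasFDerivAt.comp_hasDerivAt z hf)
  have him : HasDerivAt (fun w => (f w).im) f'.im z :=
    (Complex.imCLM.hasFDerivAt.comp_hasDerivAt z hf)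
  have h := (hre.mul hre).add (him.mul him)
  have heq : (fun w => ‖f w‖ ^ 2) = fun w => (f w).re * (f w).re + (f w).im * (f w).im := by
    funext w
    rw [← Complex.normSq_apply, ← Complex.sq_norm]
  rw [heq]
  refine h.congr_deriv ?_
  simp [Complex.mul_re, Complex.conj_re, Complex.conj_im]
  ring

lemma hasDerivAt_N {ι : Type*} [Fintype ι] (ρ : ι → ℝ) (u : ℝ → ι → ℂ) (u' : ι → ℂ) (z : ℝ)
    (hu : ∀ g, HasDerivAt (fun w => u w g) (u' g) z) :
    HasDerivAt (fun w => ∑ g, ρ g * ‖u w g‖ ^ 2)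
      (∑ g, ρ g * (2 * ((starRingEnd ℂ) (u z g) * u' g).re)) z := by
  apply HasDerivAt.fun_sum
  intro g _
  exact (hasDerivAt_normSq (fun w => u w g) (u' g) z (hu g)).const_mul (ρ g)

lemma deriv_sum_eq {ι : Type*} [Fintype ι] (ρ : ι → ℝ) (hρ : ∀ g, 0 < ρ g)
    (u : ι → ℂ) (T : ι → ℂ) :
    ∑ g, ρ g * (2 * ((starRingEnd ℂ) (u g) * (((π / ρ g : ℝ) : ℂ) * (Complex.I * T g))).re)
      = 2 * π * (Complex.I * ∑ g, (starRingEnd ℂ) (u g) * T g).re := by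
  rw [Finset.mul_sum, Complex.re_sum, Finset.mul_sum]
  apply Finset.sum_congr rfl
  intro g _
  have hg := (hρ g).ne'
  have e1 : (starRingEnd ℂ) (u g) * (((π / ρ g : ℝ) : ℂ) * (Complex.I * T g))
      = ((π / ρ g : ℝ) : ℂ) * (Complex.I * ((starRingEnd ℂ) (u g) * T g)) := by ring
  rw [e1, Complex.re_ofReal_mul]
  field_simp

lemma herm_re_zero {ι : Type*} [Fintype ι] (H : ι → ι → ℂ)
    (hH : ∀ g h, H g h = starRingEnd ℂ (H h g)) (u : ι → ℂ) :
    (Complex.I * ∑ g, (starRingEnd ℂ) (u g) * ∑ h, H g h * u h).re = 0 := by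
  set S : ℂ := ∑ g, (starRingEnd ℂ) (u g) * ∑ h, H g h * u h with hS
  have hconj : (starRingEnd ℂ) S = S := by
    calc (starRingEnd ℂ) S
        = ∑ g, (starRingEnd ℂ) ((starRingEnd ℂ) (u g) * ∑ h, H g h * u h) := by
          rw [hS, map_sum]
      _ = ∑ g, ∑ h, (starRingEnd ℂ) (u h) * (H h g * u g) := by
          apply Finset.sum_congr rfl; intro g _
          rw [map_mul, Complex.conj_conj, map_sum, Finset.mul_sum]
          apply Finset.sum_congr rfl; intro h _
          rw [map_mul, ← hH h g]; ring
      _ = ∑ h, ∑ g, (starRingEnd ℂ) (u h) * (H h g * u g) := Finset.sum_comm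
      _ = S := by
          rw [hS]; apply Finset.sum_congr rfl; intro g _; rw [Finset.mul_sum]
  have him : S.im = 0 := by
    have h2 := congrArg Complex.im hconj
    simp only [Complex.conj_im] at h2
    linarith
  simp [Complex.mul_re, Complex.I_re, Complex.I_im, him]

/-- Conservation of the weighted norm for a Hermitian system. -/
lemma conserved {ι : Type*} [Fintype ι] (ρ : ι → ℝ) (hρ : ∀ g, 0 < ρ g)
    (H : ι → ι → ℂ) (hH : ∀ g h, H g h = starRingEnd ℂ (H h g))
    (u : ℝ → ι → ℂ)
    (hu : ∀ z g, HasDerivAt (fun w => u w g)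
       (((π / ρ g : ℝ) : ℂ) * (Complex.I * ∑ h, H g h * u z h)) z) (z : ℝ) :
    ∑ g, ρ g * ‖u z g‖ ^ 2 = ∑ g, ρ g * ‖u 0 g‖ ^ 2 := by
  set N := fun w => ∑ g, ρ g * ‖u w g‖ ^ 2 with hN
  have hderiv : ∀ w : ℝ, HasDerivAt N 0 w := by
    intro w
    have h := hasDerivAt_N ρ u
      (fun g => ((π / ρ g : ℝ) : ℂ) * (Complex.I * ∑ h, H g h * u w h)) w (hu w)
    have e := deriv_sum_eq ρ hρ (u w) (fun g => ∑ h, H g h * u w h)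
    rw [e, herm_re_zero H hH (u w), mul_zero] at h
    exact h
  have hdiff : Differentiable ℝ N := fun w => (hderiv w).differentiableAt
  have hzero : ∀ w, deriv N w = 0 := fun w => (hderiv w).deriv
  exact is_const_of_deriv_eq_zero hdiff hzero z 0

/-- Energy estimate for the forced Hermitian system with zero initial datum. -/
lemma forced {ι : Type*} [Fintype ι] (ρ : ι → ℝ) (hρ : ∀ g, 0 < ρ g)
    (H : ι → ι → ℂ) (hH : ∀ g h, H g h = starRingEnd ℂ (H h g))
    (u : ℝ → ι → ℂ) (f : ℝ → ι → ℂ) (K : ℝ) (hK : 0 ≤ K)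
    (hu : ∀ z g, HasDerivAt (fun w => u w g)
       (((π / ρ g : ℝ) : ℂ) * (Complex.I * (∑ h, H g h * u z h + f z g))) z)
    (hu0 : ∀ g, u 0 g = 0)
    (hf : ∀ z, ∑ g, ‖f z g‖ ^ 2 / ρ g ≤ K ^ 2) (z : ℝ) :
    Real.sqrt (∑ g, ρ g * ‖u z g‖ ^ 2) ≤ π * K * |z| := by
  set N := fun w => ∑ g, ρ g * ‖u w g‖ ^ 2 with hNdef
  have hN0 : ∀ w, 0 ≤ N w := fun w =>
    Finset.sum_nonneg fun g _ => mul_nonneg (hρ g).le (sq_nonneg _)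
  -- the derivative of N
  set D := fun w => 2 * π * (Complex.I * ∑ g, (starRingEnd ℂ) (u w g) * f w g).re with hDdef
  have hderiv : ∀ w : ℝ, HasDerivAt N (D w) w := by
    intro w
    have h := hasDerivAt_N ρ u
      (fun g => ((π / ρ g : ℝ) : ℂ) * (Complex.I * (∑ h, H g h * u w h + f w g))) w (hu w)
    have e := deriv_sum_eq ρ hρ (u w) (fun g => ∑ h, H g h * u w h + f w g)
    rw [e] at h
    have e2 : (Complex.I * ∑ g, (starRingEnd ℂ) (u w g) * (∑ h, H g h * u w h + f w g)).re
        = (Complex.I * ∑ g, (starRingEnd ℂ) (u w g) * f w g).re := by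
      have esplit : ∑ g, (starRingEnd ℂ) (u w g) * (∑ h, H g h * u w h + f w g)
          = (∑ g, (starRingEnd ℂ) (u w g) * ∑ h, H g h * u w h)
            + ∑ g, (starRingEnd ℂ) (u w g) * f w g := by
        rw [← Finset.sum_add_distrib]
        exact Finset.sum_congr rfl fun g _ => by ring
      rw [esplit, mul_add, Complex.add_re, herm_re_zero H hH (u w), zero_add]
    rw [e2] at h
    exact h
  -- bound |D w| ≤ 2 π K √(N w)
  have hDbound : ∀ w, |D w| ≤ 2 * π * K * Real.sqrt (N w) := by
    intro w
    have h1 : |(Complex.I * ∑ g, (starRingEnd ℂ) (u w g) * f w g).re|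
        ≤ ∑ g, ‖u w g‖ * ‖f w g‖ := by
      calc |(Complex.I * ∑ g, (starRingEnd ℂ) (u w g) * f w g).re|
          ≤ ‖Complex.I * ∑ g, (starRingEnd ℂ) (u w g) * f w g‖ := Complex.abs_re_le_norm _
        _ = ‖∑ g, (starRingEnd ℂ) (u w g) * f w g‖ := by
            rw [norm_mul, Complex.norm_I, one_mul]
        _ ≤ ∑ g, ‖(starRingEnd ℂ) (u w g) * f w g‖ := norm_sum_le _ _
        _ = ∑ g, ‖u w g‖ * ‖f w g‖ := by
            apply Finset.sum_congr rfl; intro g _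
            rw [norm_mul, Complex.norm_conj]
    have h2 : ∑ g, ‖u w g‖ * ‖f w g‖ ≤ Real.sqrt (N w) * K := by
      have hcs := Finset.sum_mul_sq_le_sq_mul_sq Finset.univ
        (fun g => Real.sqrt (ρ g) * ‖u w g‖) (fun g => ‖f w g‖ / Real.sqrt (ρ g))
      have e1 : ∀ g : ι, Real.sqrt (ρ g) * ‖u w g‖ * (‖f w g‖ / Real.sqrt (ρ g))
          = ‖u w g‖ * ‖f w g‖ := by
        intro g
        have hsg : Real.sqrt (ρ g) ≠ 0 := (Real.sqrt_pos.mpr (hρ g)).ne'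
        field_simp
      have e2 : ∀ g : ι, (Real.sqrt (ρ g) * ‖u w g‖) ^ 2 = ρ g * ‖u w g‖ ^ 2 := by
        intro g; rw [mul_pow, Real.sq_sqrt (hρ g).le]
      have e3 : ∀ g : ι, (‖f w g‖ / Real.sqrt (ρ g)) ^ 2 = ‖f w g‖ ^ 2 / ρ g := by
        intro g; rw [div_pow, Real.sq_sqrt (hρ g).le]
      simp only [e1, e2, e3] at hcs
      have hsq : (∑ g, ‖u w g‖ * ‖f w g‖) ^ 2 ≤ N w * K ^ 2 := by
        refine le_trans hcs ?_
        apply mul_le_mul_of_nonneg_left (hf w) (hN0 w)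
      have hnn : (0:ℝ) ≤ ∑ g, ‖u w g‖ * ‖f w g‖ :=
        Finset.sum_nonneg fun g _ => mul_nonneg (norm_nonneg _) (norm_nonneg _)
      calc ∑ g, ‖u w g‖ * ‖f w g‖ = Real.sqrt ((∑ g, ‖u w g‖ * ‖f w g‖)^2) :=
            (Real.sqrt_sq hnn).symm
        _ ≤ Real.sqrt (N w * K ^ 2) := Real.sqrt_le_sqrt hsq
        _ = Real.sqrt (N w) * K := by
            rw [Real.sqrt_mul (hN0 w), Real.sqrt_sq hK]
    calc |D w| = 2 * π * |(Complex.I * ∑ g, (starRingEnd ℂ) (u w g) * f w g).re| := by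
          rw [hDdef, abs_mul]
          congr 1
          exact abs_of_nonneg (by positivity)
      _ ≤ 2 * π * (Real.sqrt (N w) * K) := by
          apply mul_le_mul_of_nonneg_left (le_trans h1 h2) (by positivity)
      _ = 2 * π * K * Real.sqrt (N w) := by ring
  -- ε-regularized square root argument
  have key : ∀ ε : ℝ, 0 < ε → Real.sqrt (N z) ≤ π * K * |z| + ε := by
    intro ε hε
    set y := fun w => Real.sqrt (N w + ε ^ 2) with hy
    have hNε : ∀ w, 0 < N w + ε ^ 2 := fun w => by linarith [hN0 w, pow_pos hε 2]
    have hyderiv : ∀ w, HasDerivAt y (D w * (1 / (2 * Real.sqrt (N w + ε ^ 2)))) w := by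
      intro w
      have h1 : HasDerivAt (fun w => N w + ε ^ 2) (D w) w := (hderiv w).add_const _
      have h2 := (Real.hasDerivAt_sqrt (hNε w).ne').comp w h1
      refine h2.congr_deriv ?_
      ring
    have hybound : ∀ w, ‖D w * (1 / (2 * Real.sqrt (N w + ε ^ 2)))‖ ≤ π * K := by
      intro w
      rw [Real.norm_eq_abs, abs_mul]
      have hs : 0 < Real.sqrt (N w + ε ^ 2) := Real.sqrt_pos.mpr (hNε w)
      have h5 : (0:ℝ) < 2 * Real.sqrt (N w + ε ^ 2) := by linarith
      rw [abs_of_pos (one_div_pos.mpr h5)]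
      have h4 : Real.sqrt (N w) ≤ Real.sqrt (N w + ε ^ 2) :=
        Real.sqrt_le_sqrt (by linarith [sq_nonneg ε])
      calc |D w| * (1 / (2 * Real.sqrt (N w + ε ^ 2)))
          ≤ (2 * π * K * Real.sqrt (N w + ε^2)) * (1 / (2 * Real.sqrt (N w + ε ^ 2))) := by
            apply mul_le_mul_of_nonneg_right _ (by positivity)
            exact le_trans (hDbound w) (by
              apply mul_le_mul_of_nonneg_left h4 (by positivity))
        _ = π * K := by
            have hs' : Real.sqrt (N w + ε ^ 2) ≠ 0 := hs.ne'
            field_simp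
    have hmvt := Convex.norm_image_sub_le_of_norm_hasDerivWithin_le
      (f := y) (f' := fun w => D w * (1 / (2 * Real.sqrt (N w + ε ^ 2))))
      (s := Set.univ) (C := π * K)
      (fun x _ => (hyderiv x).hasDerivWithinAt)
      (fun x _ => hybound x) convex_univ (Set.mem_univ 0) (Set.mem_univ z)
    have hy0 : y 0 = ε := by
      have : N 0 = 0 := by
        rw [hNdef]
        simp only
        apply Finset.sum_eq_zero
        intro g _
        rw [hu0 g]
        simp
      rw [hy]; simp only [this, zero_add]
      exact Real.sqrt_sq hε.le
    have hle : y z - y 0 ≤ π * K * |z| := by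
      have := le_trans (le_abs_self _) (le_trans (le_of_eq (Real.norm_eq_abs _).symm) hmvt)
      simpa [Real.norm_eq_abs] using this
    have : Real.sqrt (N z) ≤ y z := Real.sqrt_le_sqrt (by linarith [sq_nonneg ε])
    rw [hy0] at hle
    linarith
  have : Real.sqrt (N z) ≤ π * K * |z| := by
    by_contra hcon
    push_neg at hcon
    obtain ⟨ε, hε, hlt⟩ : ∃ ε : ℝ, 0 < ε ∧ π * K * |z| + ε < Real.sqrt (N z) :=
      ⟨(Real.sqrt (N z) - π * K * |z|) / 2, by linarith, by linarith⟩
    exact absurd (key ε hε) (not_le.mpr hlt)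
  exact this


variable {d : ℕ}

def Lmap (b : Module.Basis (Fin d) ℝ (V d)) (c : Fin d → ℤ) : V d := ∑ i, (c i : ℝ) • b i

lemma Lmap_eq (b : Module.Basis (Fin d) ℝ (V d)) (c : Fin d → ℤ) :
    Lmap b c = b.equivFun.symm (fun i => (c i : ℝ)) := by
  rw [Module.Basis.equivFun_symm_apply]; rfl

/-- operator norm of the coordinate map. -/
def CB (b : Module.Basis (Fin d) ℝ (V d)) : ℝ :=
  ‖(LinearMap.toContinuousLinearMap (b.equivFun : V d →ₗ[ℝ] (Fin d → ℝ)))‖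

lemma CB_nonneg (b : Module.Basis (Fin d) ℝ (V d)) : 0 ≤ CB b := norm_nonneg _

lemma coord_eq (b : Module.Basis (Fin d) ℝ (V d)) (c : Fin d → ℤ) :
    (fun i => (c i : ℝ)) = b.equivFun (Lmap b c) := by
  rw [Lmap_eq, LinearEquiv.apply_symm_apply]

lemma coord_bound (b : Module.Basis (Fin d) ℝ (V d)) (c : Fin d → ℤ) (i : Fin d) :
    |(c i : ℝ)| ≤ CB b * ‖Lmap b c‖ := by
  have h1 : |(c i : ℝ)| = ‖(fun i => (c i : ℝ)) i‖ := rfl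
  rw [h1, coord_eq b c]
  calc ‖b.equivFun (Lmap b c) i‖ ≤ ‖b.equivFun (Lmap b c)‖ := norm_le_pi_norm _ i
    _ = ‖(LinearMap.toContinuousLinearMap (b.equivFun : V d →ₗ[ℝ] (Fin d → ℝ))) (Lmap b c)‖ := by
        rw [LinearMap.coe_toContinuousLinearMap']; rfl
    _ ≤ CB b * ‖Lmap b c‖ := ContinuousLinearMap.le_opNorm _ _

lemma Lmap_inj (b : Module.Basis (Fin d) ℝ (V d)) : Function.Injective (Lmap b) := by
  intro c c' h
  have h2 : (fun i => (c i : ℝ)) = fun i => (c' i : ℝ) := by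
    rw [coord_eq b c, coord_eq b c', h]
  funext i
  exact_mod_cast congrFun h2 i

lemma sum_abs_bound (b : Module.Basis (Fin d) ℝ (V d)) (c : Fin d → ℤ) :
    ∑ i, |(c i : ℝ)| ≤ (d * (CB b + 1)) * ‖Lmap b c‖ := by
  calc ∑ i, |(c i : ℝ)| ≤ ∑ _i : Fin d, (CB b + 1) * ‖Lmap b c‖ := by
        apply Finset.sum_le_sum
        intro i _
        refine le_trans (coord_bound b c i) ?_
        apply mul_le_mul_of_nonneg_right (by linarith) (norm_nonneg _)
    _ = (d * (CB b + 1)) * ‖Lmap b c‖ := by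
        rw [Finset.sum_const, Finset.card_univ, Fintype.card_fin, nsmul_eq_mul]; ring

lemma summable_pi_int : ∀ (n : ℕ) (r : ℝ), 0 ≤ r → r < 1 →
    Summable (fun c : Fin n → ℤ => ∏ i, r ^ (c i).natAbs) := by
  intro n
  induction n with
  | zero =>
      intro r _ _
      haveI : Finite (Fin 0 → ℤ) := Finite.of_subsingleton
      exact Summable.of_finite
  | succ n ih =>
      intro r h0 h1
      have hz : Summable (fun k : ℤ => r ^ k.natAbs) := by
        apply Summable.of_nat_of_neg
        · simpa using summable_geometric_of_lt_one h0 h1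
        · simpa using summable_geometric_of_lt_one h0 h1
      have hprod := Summable.mul_of_nonneg hz (ih r h0 h1)
        (fun k => pow_nonneg h0 _)
        (fun c => Finset.prod_nonneg fun i _ => pow_nonneg h0 _)
      have := (Fin.consEquiv (fun _ : Fin (n+1) => ℤ)).symm.summable_iff.mpr hprod
      refine this.congr ?_
      intro c
      simp only [Fin.consEquiv, Equiv.coe_fn_symm_mk]
      rw [Fin.prod_univ_succ]
      rfl

lemma exp_le_prod (b : Module.Basis (Fin d) ℝ (V d)) (hd : 0 < d) (β : ℝ) (hβ : 0 < β)
    (c : Fin d → ℤ) :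
    Real.exp (-β * ‖Lmap b c‖) ≤
      ∏ i, (Real.exp (-(β / (d * (CB b + 1))))) ^ (c i).natAbs := by
  set m : ℝ := d * (CB b + 1) with hm
  have hm0 : 0 < m := by
    have : (1:ℝ) ≤ (d:ℝ) := by exact_mod_cast hd
    have := CB_nonneg b
    nlinarith
  have key : -β * ‖Lmap b c‖ ≤ ∑ i, -(β / m) * |(c i : ℝ)| := by
    have h1 : ∑ i, -(β / m) * |(c i : ℝ)| = -(β / m) * ∑ i, |(c i : ℝ)| := by
      rw [Finset.mul_sum]
    rw [h1]
    have h2 := sum_abs_bound b c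
    rw [← hm] at h2
    have h3 : (β / m) * ∑ i, |(c i : ℝ)| ≤ (β / m) * (m * ‖Lmap b c‖) :=
      mul_le_mul_of_nonneg_left h2 (by positivity)
    have h4 : (β / m) * (m * ‖Lmap b c‖) = β * ‖Lmap b c‖ := by field_simp
    nlinarith
  calc Real.exp (-β * ‖Lmap b c‖) ≤ Real.exp (∑ i, -(β / m) * |(c i : ℝ)|) :=
        Real.exp_le_exp.mpr key
    _ = ∏ i, Real.exp (-(β / m) * |(c i : ℝ)|) := Real.exp_sum _ _
    _ = ∏ i, (Real.exp (-(β / m))) ^ (c i).natAbs := by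
        apply Finset.prod_congr rfl
        intro i _
        have habs : |(c i : ℝ)| = ((c i).natAbs : ℝ) := by
          rw [Nat.cast_natAbs, Int.cast_abs]
        rw [habs, show -(β/m) * ((c i).natAbs : ℝ) = ((c i).natAbs : ℝ) * (-(β/m)) by ring,
          Real.exp_nat_mul]

section lat
variable {Λ : Set (V d)} {b : Module.Basis (Fin d) ℝ (V d)}

lemma mem_lat_iff (hb : Λ = {x : V d | ∃ c : Fin d → ℤ, x = ∑ i, (c i : ℝ) • b i}) (x : V d) : x ∈ Λ ↔ ∃ c : Fin d → ℤ, x = Lmap b c := by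
  rw [hb]; rfl

lemma zero_mem_lat (hb : Λ = {x : V d | ∃ c : Fin d → ℤ, x = ∑ i, (c i : ℝ) • b i}) : (0 : V d) ∈ Λ := by
  rw [mem_lat_iff hb]
  exact ⟨0, by simp [Lmap]⟩

lemma sub_mem_lat (hb : Λ = {x : V d | ∃ c : Fin d → ℤ, x = ∑ i, (c i : ℝ) • b i}) {x y : V d} (hx : x ∈ Λ) (hy : y ∈ Λ) : x - y ∈ Λ := by
  rw [mem_lat_iff hb] at hx hy ⊢
  obtain ⟨c, rfl⟩ := hx
  obtain ⟨c', rfl⟩ := hy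
  refine ⟨c - c', ?_⟩
  simp only [Lmap, ← Finset.sum_sub_distrib]
  apply Finset.sum_congr rfl
  intro i _
  rw [← sub_smul]
  norm_num

/-- the lattice equivalence -/
def latEquiv (hb : Λ = {x : V d | ∃ c : Fin d → ℤ, x = ∑ i, (c i : ℝ) • b i}) :
    (Fin d → ℤ) ≃ Λ :=
  Equiv.ofBijective (fun c => ⟨Lmap b c, (mem_lat_iff hb _).mpr ⟨c, rfl⟩⟩)
    ⟨fun c c' h => Lmap_inj b (congrArg Subtype.val h),
     fun ⟨x, hx⟩ => by
        obtain ⟨c, hc⟩ := (mem_lat_iff hb x).mp hx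
        exact ⟨c, Subtype.ext hc.symm⟩⟩

lemma summable_exp_lat (hb : Λ = {x : V d | ∃ c : Fin d → ℤ, x = ∑ i, (c i : ℝ) • b i}) (hd : 0 < d) (β : ℝ) (hβ : 0 < β) :
    Summable (fun κ : Λ => Real.exp (-β * ‖(κ : V d)‖)) := by
  rw [← Equiv.summable_iff (latEquiv hb)]
  have hr0 : (0:ℝ) ≤ Real.exp (-(β / (d * (CB b + 1)))) := (Real.exp_pos _).le
  have hm0 : 0 < (d : ℝ) * (CB b + 1) := by
    have h1 : (1:ℝ) ≤ (d:ℝ) := by exact_mod_cast hd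
    have h2 := CB_nonneg b
    nlinarith
  have hr1 : Real.exp (-(β / (d * (CB b + 1)))) < 1 := by
    rw [Real.exp_lt_one_iff]
    have : 0 < β / (d * (CB b + 1)) := by positivity
    linarith
  apply Summable.of_nonneg_of_le (fun c => (Real.exp_pos _).le)
    (fun c => exp_le_prod b hd β hβ c)
    (summable_pi_int d _ hr0 hr1)

lemma ball_finite_lat (hb : Λ = {x : V d | ∃ c : Fin d → ℤ, x = ∑ i, (c i : ℝ) • b i}) (M : ℝ) (hM : 0 ≤ M) :
    ({g ∈ Λ | ‖g‖ ≤ M} : Set (V d)).Finite := by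
  set B : ℤ := ⌈(CB b + 1) * M⌉ with hB
  have hfin : (Set.univ.pi (fun _ : Fin d => Set.Icc (-B) B)).Finite :=
    Set.Finite.pi fun _ => Set.finite_Icc _ _
  apply Set.Finite.subset (hfin.image (Lmap b))
  rintro x ⟨hxΛ, hxM⟩
  obtain ⟨c, rfl⟩ := (mem_lat_iff hb x).mp hxΛ
  refine ⟨c, ?_, rfl⟩
  intro i _
  have h1 : |(c i : ℝ)| ≤ (CB b + 1) * M := by
    have h2 := coord_bound b c i
    have h3 : CB b * ‖Lmap b c‖ ≤ (CB b + 1) * M := by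
      have := CB_nonneg b
      nlinarith [norm_nonneg (Lmap b c)]
    linarith
  have h4 : ((|c i| : ℤ) : ℝ) ≤ (B : ℝ) := by
    rw [Int.cast_abs]
    exact le_trans h1 (Int.le_ceil _)
  have h5 : |c i| ≤ B := by exact_mod_cast h4
  exact Set.mem_Icc.mpr (abs_le.mp h5)

end lat

end Stmt9Aux

set_option maxHeartbeats 1000000 in
open Classical in
/-- Theorem 3.10, reduction to the Ewald sphere:
with `G^M_Ew = {g ∈ G^M : |σ_g|/(2ρ_g) < s̃}` and solutions `ψ^M`, `ψ^M_Ew` of the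
finite systems `DHW_{G^M}` and `DHW_{G^M_Ew}` with initial datum `δ`, one has
`‖ψ^M_Ew(z) - ψ^M(z)|_{G^M_Ew}‖ ≤ |z|·(π/s̃)·(C_U²(𝔖₀(α_U)-1)𝔖₀(α_U)/(γ²ρ₀²))·√ρ₀`
for all `z`. -/
theorem stmt9 {d : ℕ} (hd : 0 < d) (Λ : Set (V d)) (hΛ : IsLattice Λ)
    (k₀ : V d) (hk : 0 < ⟪k₀, nu d hd⟫)
    (U : V d → ℂ) (hUsym : ∀ g ∈ Λ, U (-g) = starRingEnd ℂ (U g))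
    (CU αU : ℝ) (hCU : 0 < CU) (hαU : 0 < αU)
    (hUbd : ∀ g ∈ Λ, ‖U g‖ ≤ CU * Real.exp (-αU * ‖g‖))
    (γ : ℝ) (hγ : γ ∈ Set.Ioo (0 : ℝ) 1)
    (M : ℝ) (hM : 0 < M) (hMsub : GMball Λ M ⊆ Gset Λ k₀ (nu d hd) γ)
    (st : ℝ) (hst : 0 < st)
    (ψM : ℝ → V d → ℂ)
    (hψM : SatDHW k₀ (nu d hd) U (GMball Λ M) ψM)
    (hψM0 : InitDelta (GMball Λ M) ψM)
    (ψEw : ℝ → V d → ℂ)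
    (hψEw : SatDHW k₀ (nu d hd) U
      {g ∈ GMball Λ M | |sig k₀ g| / (2 * rho k₀ (nu d hd) g) < st} ψEw)
    (hψEw0 : InitDelta
      {g ∈ GMball Λ M | |sig k₀ g| / (2 * rho k₀ (nu d hd) g) < st} ψEw) :
    ∀ z : ℝ,
      Real.sqrt (∑' g : {g ∈ GMball Λ M |
            |sig k₀ g| / (2 * rho k₀ (nu d hd) g) < st},
          rho k₀ (nu d hd) (g : V d) * ‖ψEw z (g : V d) - ψM z (g : V d)‖ ^ 2) ≤
        |z| * (π / st) *
          (CU ^ 2 * (Sm Λ 0 αU - 1) * Sm Λ 0 αU / (γ ^ 2 * ⟪k₀, nu d hd⟫ ^ 2)) *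
            Real.sqrt ⟪k₀, nu d hd⟫ := by
  intro z
  obtain ⟨hγ0, hγ1⟩ := hγ
  obtain ⟨b, hb⟩ := hΛ
  set ν : V d := nu d hd with hνdef
  set r0 : ℝ := ⟪k₀, ν⟫ with hr0def
  have hr0 : 0 < r0 := hk
  set S0 : ℝ := Sm Λ 0 αU with hS0def
  -- basic lattice facts
  have h0Λ : (0 : V d) ∈ Λ := Stmt9Aux.zero_mem_lat hb
  have hsub : ∀ x ∈ Λ, ∀ y ∈ Λ, x - y ∈ Λ :=
    fun x hx y hy => Stmt9Aux.sub_mem_lat hb hx hy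
  have hsummable : Summable (fun κ : Λ => Real.exp (-αU * ‖(κ : V d)‖)) :=
    Stmt9Aux.summable_exp_lat hb hd αU hαU
  have hS0eq : S0 = ∑' κ : Λ, Real.exp (-αU * ‖(κ : V d)‖) := by
    rw [hS0def]
    exact tsum_congr fun κ => by rw [pow_zero, one_mul]
  have hS0ge1 : 1 ≤ S0 := by
    rw [hS0eq]
    have h := Summable.le_tsum hsummable ⟨0, h0Λ⟩ (fun j _ => (Real.exp_pos _).le)
    simpa using h
  have hS0pos : 0 < S0 := lt_of_lt_of_le zero_lt_one hS0ge1
  have hS0m1 : 0 ≤ S0 - 1 := by linarith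
  -- finite subset sums of exponentials
  have hTsum : ∀ T : Finset (V d), (∀ x ∈ T, x ∈ Λ) →
      ∑ x ∈ T, Real.exp (-αU * ‖x‖) ≤ S0 := by
    intro T hT
    rw [hS0eq]
    have hinj : Function.Injective (fun x : {y // y ∈ T} => (⟨x.1, hT x.1 x.2⟩ : Λ)) := by
      intro x y hxy
      have h2 : (x : V d) = (y : V d) := congrArg (fun t : {y // y ∈ Λ} => (t : V d)) hxy
      exact Subtype.ext h2
    calc ∑ x ∈ T, Real.exp (-αU * ‖x‖)
        = ∑ x ∈ T.attach.map ⟨_, hinj⟩, Real.exp (-αU * ‖(x : V d)‖) := by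
          rw [Finset.sum_map]
          exact (Finset.sum_attach T fun x => Real.exp (-αU * ‖x‖)).symm
      _ ≤ _ := hsummable.sum_le_tsum _ (fun i _ => (Real.exp_pos _).le)
  have hTsum' : ∀ T : Finset (V d), (∀ x ∈ T, x ∈ Λ) → (0 : V d) ∉ T →
      ∑ x ∈ T, Real.exp (-αU * ‖x‖) ≤ S0 - 1 := by
    intro T hT h0
    have h := hTsum (insert 0 T) (by
      intro x hx
      rcases Finset.mem_insert.mp hx with h | h
      · rw [h]; exact h0Λ
      · exact hT x h)
    rw [Finset.sum_insert h0] at h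
    have he : Real.exp (-αU * ‖(0 : V d)‖) = 1 := by simp
    rw [he] at h
    linarith
  -- finiteness of the beam sets
  have hfinGM : (GMball Λ M).Finite := Stmt9Aux.ball_finite_lat hb M hM.le
  set Ew : Set (V d) := {g ∈ GMball Λ M | |sig k₀ g| / (2 * rho k₀ ν g) < st} with hEwdef
  have hEwsub : Ew ⊆ GMball Λ M := fun g hg => hg.1
  have hfinEw : Ew.Finite := hfinGM.subset hEwsub
  set A : Finset (V d) := hfinGM.toFinset with hAdef
  set Ef : Finset (V d) := hfinEw.toFinset with hEfdef
  have hAmem : ∀ g : V d, g ∈ A ↔ g ∈ GMball Λ M := fun g => hfinGM.mem_toFinset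
  have hEfmem : ∀ g : V d, g ∈ Ef ↔ g ∈ Ew := fun g => hfinEw.mem_toFinset
  have hEA : Ef ⊆ A := fun g hg => (hAmem g).mpr (hEwsub ((hEfmem g).mp hg))
  set Rf : Finset (V d) := A \ Ef with hRfdef
  have hγr0 : 0 < γ * r0 := mul_pos hγ0 hr0
  have hrhoA : ∀ g ∈ A, γ * r0 ≤ rho k₀ ν g := fun g hg => (hMsub ((hAmem g).mp hg)).2
  have hrhopos : ∀ g ∈ A, 0 < rho k₀ ν g := fun g hg => lt_of_lt_of_le hγr0 (hrhoA g hg)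
  have hΛA : ∀ g ∈ A, g ∈ Λ := fun g hg => ((hAmem g).mp hg).1
  have h0GM : (0 : V d) ∈ GMball Λ M := ⟨h0Λ, by simp [GMball, hM.le]⟩
  have h0A : (0 : V d) ∈ A := (hAmem 0).mpr h0GM
  have hsig0 : sig k₀ (0 : V d) = 0 := by simp [sig]
  have hrho0 : rho k₀ ν (0 : V d) = r0 := by rw [hr0def]; simp [rho]
  -- U bounds and row/column sums of the interaction matrix
  have hUnorm : ∀ g ∈ Λ, ∀ h ∈ Λ, ‖U (g - h)‖ ≤ CU * Real.exp (-αU * ‖g - h‖) :=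
    fun g hg h hh => hUbd _ (hsub _ hg _ hh)
  have himg1 : ∀ g ∈ Λ, ∀ T : Finset (V d), (∀ x ∈ T, x ∈ Λ) →
      ∑ h ∈ T, Real.exp (-αU * ‖g - h‖) ≤ S0 := by
    intro g hg T hT
    have hinj : ∀ x ∈ T, ∀ y ∈ T, g - x = g - y → x = y :=
      fun x _ y _ hxy => sub_right_injective hxy
    calc ∑ h ∈ T, Real.exp (-αU * ‖g - h‖)
        = ∑ x ∈ T.image (fun h => g - h), Real.exp (-αU * ‖x‖) :=
          (Finset.sum_image (f := fun x => Real.exp (-αU * ‖x‖)) hinj).symm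
      _ ≤ S0 := by
          apply hTsum
          intro x hx
          obtain ⟨h, hh, rfl⟩ := Finset.mem_image.mp hx
          exact hsub _ hg _ (hT h hh)
  have himg1' : ∀ g ∈ Λ, ∀ T : Finset (V d), (∀ x ∈ T, x ∈ Λ) → g ∉ T →
      ∑ h ∈ T, Real.exp (-αU * ‖g - h‖) ≤ S0 - 1 := by
    intro g hg T hT hgT
    have hinj : ∀ x ∈ T, ∀ y ∈ T, g - x = g - y → x = y :=
      fun x _ y _ hxy => sub_right_injective hxy
    calc ∑ h ∈ T, Real.exp (-αU * ‖g - h‖)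
        = ∑ x ∈ T.image (fun h => g - h), Real.exp (-αU * ‖x‖) :=
          (Finset.sum_image (f := fun x => Real.exp (-αU * ‖x‖)) hinj).symm
      _ ≤ S0 - 1 := by
          apply hTsum'
          · intro x hx
            obtain ⟨h, hh, rfl⟩ := Finset.mem_image.mp hx
            exact hsub _ hg _ (hT h hh)
          · intro hx
            obtain ⟨h, hh, hzero⟩ := Finset.mem_image.mp hx
            exact hgT ((sub_eq_zero.mp hzero).symm ▸ hh)
  have himg2' : ∀ h ∈ Λ, ∀ T : Finset (V d), (∀ x ∈ T, x ∈ Λ) → h ∉ T →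
      ∑ g ∈ T, Real.exp (-αU * ‖g - h‖) ≤ S0 - 1 := by
    intro h hh T hT hhT
    have hinj : ∀ x ∈ T, ∀ y ∈ T, x - h = y - h → x = y :=
      fun x _ y _ hxy => sub_left_injective hxy
    calc ∑ g ∈ T, Real.exp (-αU * ‖g - h‖)
        = ∑ x ∈ T.image (fun g => g - h), Real.exp (-αU * ‖x‖) :=
          (Finset.sum_image (f := fun x => Real.exp (-αU * ‖x‖)) hinj).symm
      _ ≤ S0 - 1 := by
          apply hTsum'
          · intro x hx
            obtain ⟨g, hg, rfl⟩ := Finset.mem_image.mp hx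
            exact hsub _ (hT g hg) _ hh
          · intro hx
            obtain ⟨g, hg, hzero⟩ := Finset.mem_image.mp hx
            exact hhT ((sub_eq_zero.mp hzero) ▸ hg)
  have himg2 : ∀ h ∈ Λ, ∀ T : Finset (V d), (∀ x ∈ T, x ∈ Λ) →
      ∑ g ∈ T, Real.exp (-αU * ‖g - h‖) ≤ S0 := by
    intro h hh T hT
    have hinj : ∀ x ∈ T, ∀ y ∈ T, x - h = y - h → x = y :=
      fun x _ y _ hxy => sub_left_injective hxy
    calc ∑ g ∈ T, Real.exp (-αU * ‖g - h‖)
        = ∑ x ∈ T.image (fun g => g - h), Real.exp (-αU * ‖x‖) :=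
          (Finset.sum_image (f := fun x => Real.exp (-αU * ‖x‖)) hinj).symm
      _ ≤ S0 := by
          apply hTsum
          intro x hx
          obtain ⟨g, hg, rfl⟩ := Finset.mem_image.mp hx
          exact hsub _ (hT g hg) _ hh
  have hrowA : ∀ g ∈ A, ∑ h ∈ A, ‖U (g - h)‖ ≤ CU * S0 := by
    intro g hg
    calc ∑ h ∈ A, ‖U (g - h)‖ ≤ ∑ h ∈ A, CU * Real.exp (-αU * ‖g - h‖) :=
          Finset.sum_le_sum fun h hh => hUnorm g (hΛA g hg) h (hΛA h hh)
      _ = CU * ∑ h ∈ A, Real.exp (-αU * ‖g - h‖) := by rw [Finset.mul_sum]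
      _ ≤ CU * S0 := mul_le_mul_of_nonneg_left (himg1 g (hΛA g hg) A hΛA) hCU.le
  have hcolA : ∀ h ∈ A, ∑ g ∈ A, ‖U (g - h)‖ ≤ CU * S0 := by
    intro h hh
    calc ∑ g ∈ A, ‖U (g - h)‖ ≤ ∑ g ∈ A, CU * Real.exp (-αU * ‖g - h‖) :=
          Finset.sum_le_sum fun g hg => hUnorm g (hΛA g hg) h (hΛA h hh)
      _ = CU * ∑ g ∈ A, Real.exp (-αU * ‖g - h‖) := by rw [Finset.mul_sum]
      _ ≤ CU * S0 := mul_le_mul_of_nonneg_left (himg2 h (hΛA h hh) A hΛA) hCU.le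
  have hΛRf : ∀ x ∈ Rf, x ∈ Λ := fun x hx => hΛA x (Finset.mem_sdiff.mp hx).1
  have hΛEf : ∀ x ∈ Ef, x ∈ Λ := fun x hx => hΛA x (hEA hx)
  have hrowER : ∀ g ∈ Ef, ∑ h ∈ Rf, ‖U (g - h)‖ ≤ CU * (S0 - 1) := by
    intro g hg
    have hgRf : g ∉ Rf := fun hc => (Finset.mem_sdiff.mp hc).2 hg
    calc ∑ h ∈ Rf, ‖U (g - h)‖ ≤ ∑ h ∈ Rf, CU * Real.exp (-αU * ‖g - h‖) :=
          Finset.sum_le_sum fun h hh => hUnorm g (hΛEf g hg) h (hΛRf h hh)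
      _ = CU * ∑ h ∈ Rf, Real.exp (-αU * ‖g - h‖) := by rw [Finset.mul_sum]
      _ ≤ CU * (S0 - 1) :=
          mul_le_mul_of_nonneg_left (himg1' g (hΛEf g hg) Rf hΛRf hgRf) hCU.le
  have hcolER : ∀ h ∈ Rf, ∑ g ∈ Ef, ‖U (g - h)‖ ≤ CU * (S0 - 1) := by
    intro h hh
    have hhEf : h ∉ Ef := (Finset.mem_sdiff.mp hh).2
    calc ∑ g ∈ Ef, ‖U (g - h)‖ ≤ ∑ g ∈ Ef, CU * Real.exp (-αU * ‖g - h‖) :=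
          Finset.sum_le_sum fun g hg => hUnorm g (hΛEf g hg) h (hΛRf h hh)
      _ = CU * ∑ g ∈ Ef, Real.exp (-αU * ‖g - h‖) := by rw [Finset.mul_sum]
      _ ≤ CU * (S0 - 1) :=
          mul_le_mul_of_nonneg_left (himg2' h (hΛRf h hh) Ef hΛEf hhEf) hCU.le
  -- tsum-to-finite-sum conversions
  have htsumA : ∀ (w : ℝ) (g : V d),
      (∑' h : (GMball Λ M), U (g - (h : V d)) * ψM w (h : V d))
        = ∑ h ∈ A, U (g - h) * ψM w h :=
    fun w g => Stmt9Aux.tsum_set_finite hfinGM (fun x => U (g - x) * ψM w x)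
  have htsumEw : ∀ (w : ℝ) (g : V d),
      (∑' h : Ew, U (g - (h : V d)) * ψEw w (h : V d))
        = ∑ h ∈ Ef, U (g - h) * ψEw w h :=
    fun w g => Stmt9Aux.tsum_set_finite hfinEw (fun x => U (g - x) * ψEw w x)
  -- the Hermitian matrices
  set HA : A → A → ℂ := fun g h =>
    (if g = h then ((sig k₀ (g : V d) : ℝ) : ℂ) else 0) + U ((g : V d) - (h : V d)) with hHAdef
  set HE : Ef → Ef → ℂ := fun g h =>
    (if g = h then ((sig k₀ (g : V d) : ℝ) : ℂ) else 0) + U ((g : V d) - (h : V d)) with hHEdef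
  have hUconj : ∀ g ∈ Λ, ∀ h ∈ Λ, U (g - h) = starRingEnd ℂ (U (h - g)) := by
    intro g hg h hh
    have := hUsym (h - g) (hsub _ hh _ hg)
    rwa [neg_sub] at this
  have hHAherm : ∀ g h : A, HA g h = starRingEnd ℂ (HA h g) := by
    intro g h
    have hU : U ((g : V d) - (h : V d)) = starRingEnd ℂ (U ((h : V d) - (g : V d))) :=
      hUconj _ (hΛA _ g.2) _ (hΛA _ h.2)
    rw [hHAdef]
    simp only
    by_cases hc : g = h
    · subst hc
      have hite : (if g = g then ((sig k₀ (g : V d) : ℝ) : ℂ) else 0)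
          = ((sig k₀ (g : V d) : ℝ) : ℂ) := if_pos rfl
      rw [map_add, hite, Complex.conj_ofReal, ← hU]
    · rw [map_add, if_neg hc, if_neg (Ne.symm hc), map_zero, zero_add, zero_add, ← hU]
  have hHEherm : ∀ g h : Ef, HE g h = starRingEnd ℂ (HE h g) := by
    intro g h
    have hU : U ((g : V d) - (h : V d)) = starRingEnd ℂ (U ((h : V d) - (g : V d))) :=
      hUconj _ (hΛEf _ g.2) _ (hΛEf _ h.2)
    rw [hHEdef]
    simp only
    by_cases hc : g = h
    · subst hc
      have hite : (if g = g then ((sig k₀ (g : V d) : ℝ) : ℂ) else 0)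
          = ((sig k₀ (g : V d) : ℝ) : ℂ) := if_pos rfl
      rw [map_add, hite, Complex.conj_ofReal, ← hU]
    · rw [map_add, if_neg hc, if_neg (Ne.symm hc), map_zero, zero_add, zero_add, ← hU]
  -- sums against the Hermitian matrices
  have hHAsum : ∀ (g : A) (φ : V d → ℂ),
      ∑ h : A, HA g h * φ (h : V d)
        = ((sig k₀ (g : V d) : ℝ) : ℂ) * φ (g : V d) + ∑ h ∈ A, U ((g : V d) - h) * φ h := by
    intro g φ
    rw [hHAdef]
    simp only
    have e : ∀ h : A, ((if g = h then ((sig k₀ (g : V d) : ℝ) : ℂ) else 0)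
          + U ((g : V d) - (h : V d))) * φ (h : V d)
        = (if g = h then ((sig k₀ (g : V d) : ℝ) : ℂ) * φ (h : V d) else 0)
          + U ((g : V d) - (h : V d)) * φ (h : V d) := by
      intro h; split <;> ring
    rw [Finset.sum_congr rfl fun h _ => e h, Finset.sum_add_distrib]
    congr 1
    · rw [Finset.sum_ite_eq Finset.univ g (fun h : A => ((sig k₀ (g : V d) : ℝ) : ℂ) * φ (h : V d)),
        if_pos (Finset.mem_univ g)]
    · exact Finset.sum_coe_sort A (fun h => U ((g : V d) - h) * φ h)
  have hHEsum : ∀ (g : Ef) (φ : V d → ℂ),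
      ∑ h : Ef, HE g h * φ (h : V d)
        = ((sig k₀ (g : V d) : ℝ) : ℂ) * φ (g : V d) + ∑ h ∈ Ef, U ((g : V d) - h) * φ h := by
    intro g φ
    rw [hHEdef]
    simp only
    have e : ∀ h : Ef, ((if g = h then ((sig k₀ (g : V d) : ℝ) : ℂ) else 0)
          + U ((g : V d) - (h : V d))) * φ (h : V d)
        = (if g = h then ((sig k₀ (g : V d) : ℝ) : ℂ) * φ (h : V d) else 0)
          + U ((g : V d) - (h : V d)) * φ (h : V d) := by
      intro h; split <;> ring
    rw [Finset.sum_congr rfl fun h _ => e h, Finset.sum_add_distrib]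
    congr 1
    · rw [Finset.sum_ite_eq Finset.univ g (fun h : Ef => ((sig k₀ (g : V d) : ℝ) : ℂ) * φ (h : V d)),
        if_pos (Finset.mem_univ g)]
    · exact Finset.sum_coe_sort Ef (fun h => U ((g : V d) - h) * φ h)
  -- the GM system in matrix form
  have huM : ∀ (w : ℝ) (g : A), HasDerivAt (fun t => ψM t (g : V d))
      (((π / rho k₀ ν (g : V d) : ℝ) : ℂ) *
        (Complex.I * ∑ h : A, HA g h * ψM w (h : V d))) w := by
    intro w g
    have hder := (hψM w (g : V d) ((hAmem (g : V d)).mp g.2)).2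
    rw [htsumA w (g : V d)] at hder
    rw [hHAsum g (ψM w)]
    exact hder
  -- norm conservation for ψM
  have hρApos : ∀ g : A, 0 < rho k₀ ν (g : V d) := fun g => hrhopos _ g.2
  have hconsM := Stmt9Aux.conserved (fun g : A => rho k₀ ν (g : V d)) hρApos HA hHAherm
    (fun w g => ψM w (g : V d)) huM
  have hinitM : ∑ g ∈ A, rho k₀ ν g * ‖ψM 0 g‖ ^ 2 = r0 := by
    rw [Finset.sum_eq_single (0 : V d)]
    · rw [hψM0 0 h0GM, if_pos rfl, hrho0]
      simp
    · intro g hg hg0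
      rw [hψM0 g ((hAmem g).mp hg), if_neg hg0]
      simp
    · intro hc; exact absurd h0A hc
  have hPcons : ∀ w : ℝ, ∑ g ∈ A, rho k₀ ν g * ‖ψM w g‖ ^ 2 = r0 := by
    intro w
    have h1 := hconsM w
    rw [Finset.sum_coe_sort A (fun g => rho k₀ ν g * ‖ψM w g‖ ^ 2),
      Finset.sum_coe_sort A (fun g => rho k₀ ν g * ‖ψM 0 g‖ ^ 2)] at h1
    rw [h1, hinitM]
  -- the auxiliary field χ = A ψ
  set cchi : ℝ → V d → ℂ := fun w g =>
    (((rho k₀ ν g : ℝ) : ℂ))⁻¹ * (((sig k₀ g : ℝ) : ℂ) * ψM w g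
      + ∑ h ∈ A, U (g - h) * ψM w h) with hcchidef
  have hcchiA : ∀ (w : ℝ) (g : A), cchi w (g : V d)
      = (((rho k₀ ν (g : V d) : ℝ) : ℂ))⁻¹ * ∑ h : A, HA g h * ψM w (h : V d) := by
    intro w g
    rw [hHAsum g (ψM w), hcchidef]
  have hcchideriv : ∀ (w : ℝ) (g : A), HasDerivAt (fun t => cchi t (g : V d))
      (((π / rho k₀ ν (g : V d) : ℝ) : ℂ) *
        (Complex.I * ∑ h : A, HA g h * cchi w (h : V d))) w := by
    intro w g
    have hbase : HasDerivAt (fun t => ∑ h : A, HA g h * ψM t (h : V d))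
        (∑ h : A, HA g h * (((π / rho k₀ ν (h : V d) : ℝ) : ℂ) *
          (Complex.I * ∑ k : A, HA h k * ψM w (k : V d)))) w :=
      HasDerivAt.fun_sum fun h _ => (huM w h).const_mul (HA g h)
    have h2 := hbase.const_mul ((((rho k₀ ν (g : V d) : ℝ) : ℂ))⁻¹)
    have heqfun : (fun t => (((rho k₀ ν (g : V d) : ℝ) : ℂ))⁻¹ *
        ∑ h : A, HA g h * ψM t (h : V d)) = fun t => cchi t (g : V d) := by
      funext t; rw [hcchiA t g]
    rw [heqfun] at h2
    refine h2.congr_deriv ?_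
    have hgne : ((rho k₀ ν (g : V d) : ℝ) : ℂ) ≠ 0 :=
      Complex.ofReal_ne_zero.mpr (hρApos g).ne'
    rw [Finset.mul_sum, Finset.mul_sum, Finset.mul_sum]
    apply Finset.sum_congr rfl
    intro h _
    rw [hcchiA w h]
    have hhne : ((rho k₀ ν (h : V d) : ℝ) : ℂ) ≠ 0 :=
      Complex.ofReal_ne_zero.mpr (hρApos h).ne'
    rw [Complex.ofReal_div, Complex.ofReal_div]
    field_simp
  have hconsχ := Stmt9Aux.conserved (fun g : A => rho k₀ ν (g : V d)) hρApos HA hHAherm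
    (fun w g => cchi w (g : V d)) hcchideriv
  have hcchi0 : ∀ g : A, cchi 0 (g : V d)
      = (((rho k₀ ν (g : V d) : ℝ) : ℂ))⁻¹ * U (g : V d) := by
    intro g
    rw [hcchiA 0 g]
    congr 1
    have e : ∀ h : A, HA g h * ψM 0 (h : V d)
        = if h = (⟨0, h0A⟩ : A) then HA g h else 0 := by
      intro h
      rw [hψM0 (h : V d) ((hAmem (h : V d)).mp h.2)]
      by_cases hcase : ((h : V d) = 0)
      · rw [if_pos hcase, mul_one, if_pos (Subtype.ext hcase)]
      · rw [if_neg hcase, mul_zero,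
          if_neg (fun hc => hcase (congrArg Subtype.val hc))]
    rw [Finset.sum_congr rfl fun h _ => e h,
      Finset.sum_ite_eq' Finset.univ (⟨0, h0A⟩ : A) (fun h : A => HA g h),
      if_pos (Finset.mem_univ _)]
    rw [hHAdef]
    simp only
    have h1 : ((g : V d) - ((⟨0, h0A⟩ : A) : V d)) = (g : V d) := by simp
    rw [h1]
    have h2 : (if g = (⟨0, h0A⟩ : A) then ((sig k₀ (g : V d) : ℝ) : ℂ) else 0) = 0 := by
      by_cases hcase : g = (⟨0, h0A⟩ : A)
      · rw [if_pos hcase, hcase]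
        simp [hsig0]
      · rw [if_neg hcase]
    rw [h2, zero_add]
  have hQ0 : ∑ g : A, rho k₀ ν (g : V d) * ‖cchi 0 (g : V d)‖ ^ 2
      ≤ CU ^ 2 * S0 ^ 2 / (γ * r0) := by
    have hterm : ∀ g : A, rho k₀ ν (g : V d) * ‖cchi 0 (g : V d)‖ ^ 2
        ≤ CU ^ 2 * Real.exp (-αU * ‖(g : V d)‖) / (γ * r0) := by
      intro g
      rw [hcchi0 g]
      have hρg := hρApos g
      have hρgA := hrhoA _ g.2
      rw [norm_mul, norm_inv, Complex.norm_real, Real.norm_eq_abs,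
        abs_of_pos hρg]
      have hU1 : ‖U (g : V d)‖ ≤ CU * Real.exp (-αU * ‖(g : V d)‖) :=
        hUbd _ (hΛA _ g.2)
      have hexple : Real.exp (-αU * ‖(g : V d)‖) ≤ 1 := by
        rw [Real.exp_le_one_iff]
        have := norm_nonneg (g : V d)
        nlinarith
      have hUnn : (0:ℝ) ≤ ‖U (g : V d)‖ := norm_nonneg _
      have hU2 : ‖U (g : V d)‖ ^ 2 ≤ CU ^ 2 * Real.exp (-αU * ‖(g : V d)‖) := by
        have hsq1 : ‖U (g : V d)‖ ^ 2 ≤ (CU * Real.exp (-αU * ‖(g : V d)‖)) ^ 2 :=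
          pow_le_pow_left₀ hUnn hU1 2
        have hee : Real.exp (-αU * ‖(g : V d)‖) * Real.exp (-αU * ‖(g : V d)‖)
            ≤ Real.exp (-αU * ‖(g : V d)‖) * 1 :=
          mul_le_mul_of_nonneg_left hexple (Real.exp_pos _).le
        calc ‖U (g : V d)‖ ^ 2 ≤ (CU * Real.exp (-αU * ‖(g : V d)‖)) ^ 2 := hsq1
          _ = CU ^ 2 * (Real.exp (-αU * ‖(g : V d)‖) * Real.exp (-αU * ‖(g : V d)‖)) := by ring
          _ ≤ CU ^ 2 * (Real.exp (-αU * ‖(g : V d)‖) * 1) :=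
              mul_le_mul_of_nonneg_left hee (sq_nonneg CU)
          _ = CU ^ 2 * Real.exp (-αU * ‖(g : V d)‖) := by ring
      have lhs_eq : rho k₀ ν (g : V d) * ((rho k₀ ν (g : V d))⁻¹ * ‖U (g : V d)‖) ^ 2
          = ‖U (g : V d)‖ ^ 2 / rho k₀ ν (g : V d) := by
        field_simp
      rw [lhs_eq]
      calc ‖U (g : V d)‖ ^ 2 / rho k₀ ν (g : V d)
          ≤ ‖U (g : V d)‖ ^ 2 / (γ * r0) := by
            apply div_le_div_of_nonneg_left (by positivity) hγr0 hρgA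
        _ ≤ CU ^ 2 * Real.exp (-αU * ‖(g : V d)‖) / (γ * r0) :=
            (div_le_div_iff_of_pos_right hγr0).mpr hU2
    calc ∑ g : A, rho k₀ ν (g : V d) * ‖cchi 0 (g : V d)‖ ^ 2
        ≤ ∑ g : A, CU ^ 2 * Real.exp (-αU * ‖(g : V d)‖) / (γ * r0) :=
          Finset.sum_le_sum fun g _ => hterm g
      _ = (CU ^ 2 / (γ * r0)) * ∑ g ∈ A, Real.exp (-αU * ‖g‖) := by
          rw [Finset.mul_sum, ← Finset.sum_coe_sort A
            (fun g => CU ^ 2 / (γ * r0) * Real.exp (-αU * ‖g‖))]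
          apply Finset.sum_congr rfl
          intro g _
          ring
      _ ≤ (CU ^ 2 / (γ * r0)) * S0 := by
          apply mul_le_mul_of_nonneg_left (hTsum A hΛA) (div_nonneg (sq_nonneg CU) hγr0.le)
      _ ≤ CU ^ 2 * S0 ^ 2 / (γ * r0) := by
          rw [div_mul_eq_mul_div]
          apply (div_le_div_iff_of_pos_right hγr0).mpr
          have hSS : S0 ≤ S0 ^ 2 := by nlinarith
          nlinarith [sq_nonneg CU]
  have hQ : ∀ w : ℝ, ∑ g : A, rho k₀ ν (g : V d) * ‖cchi w (g : V d)‖ ^ 2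
      ≤ CU ^ 2 * S0 ^ 2 / (γ * r0) := by
    intro w
    rw [hconsχ w]
    exact hQ0
  -- ℓ² bound on ψM
  have hψl2 : ∀ w : ℝ, ∑ h ∈ A, ‖ψM w h‖ ^ 2 ≤ 1 / γ := by
    intro w
    have h1 : γ * r0 * ∑ h ∈ A, ‖ψM w h‖ ^ 2 ≤ r0 := by
      rw [Finset.mul_sum]
      calc ∑ h ∈ A, γ * r0 * ‖ψM w h‖ ^ 2
          ≤ ∑ h ∈ A, rho k₀ ν h * ‖ψM w h‖ ^ 2 :=
            Finset.sum_le_sum fun h hh =>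
              mul_le_mul_of_nonneg_right (hrhoA h hh) (sq_nonneg _)
        _ = r0 := hPcons w
    have h3 : ∑ h ∈ A, ‖ψM w h‖ ^ 2 ≤ r0 / (γ * r0) := by
      rw [le_div_iff₀ hγr0]
      calc (∑ h ∈ A, ‖ψM w h‖ ^ 2) * (γ * r0) = γ * r0 * ∑ h ∈ A, ‖ψM w h‖ ^ 2 := by ring
        _ ≤ r0 := h1
    have h4 : r0 / (γ * r0) = 1 / γ := by
      rw [mul_comm γ r0, ← div_div, div_self hr0.ne']
    rw [h4] at h3
    exact h3
  -- the constant
  set K : ℝ := (1 / st) * (CU ^ 2 * (S0 - 1) * S0 / (γ ^ 2 * r0 ^ 2)) * Real.sqrt r0 with hKdef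
  have hKnn : 0 ≤ K := by
    rw [hKdef]
    apply mul_nonneg (mul_nonneg (div_nonneg zero_le_one hst.le) _) (Real.sqrt_nonneg r0)
    apply div_nonneg _ (by positivity)
    exact mul_nonneg (mul_nonneg (sq_nonneg CU) hS0m1) hS0pos.le
  have hK2 : K ^ 2 = CU ^ 4 * (S0 - 1) ^ 2 * S0 ^ 2 / (st ^ 2 * γ ^ 4 * r0 ^ 3) := by
    rw [hKdef, mul_pow, mul_pow, Real.sq_sqrt hr0.le]
    field_simp [hst.ne', hγ0.ne', hr0.ne']
  -- the forcing bound
  have h4stpos : (0:ℝ) < 4 * st ^ 2 * (γ * r0) :=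
    mul_pos (mul_pos (by norm_num) (pow_pos hst 2)) hγr0
  have hCS0nn : (0:ℝ) ≤ CU * S0 := mul_nonneg hCU.le hS0pos.le
  have hforce : ∀ w : ℝ, ∑ g : Ef,
      ‖(-(∑ h ∈ Rf, U ((g : V d) - h) * ψM w h) : ℂ)‖ ^ 2 / rho k₀ ν (g : V d)
        ≤ K ^ 2 := by
    intro w
    have hB2 : ∑ g ∈ A, (∑ h ∈ A, ‖U (g - h)‖ * ‖ψM w h‖) ^ 2
        ≤ CU ^ 2 * S0 ^ 2 / γ := by
      have hsch := Stmt9Aux.schur A A (fun g h => ‖U (g - h)‖) (fun h => ‖ψM w h‖)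
        (fun g _ h _ => norm_nonneg _) (fun h _ => norm_nonneg _)
        (CU * S0) (CU * S0) hCS0nn hCS0nn hrowA hcolA
      calc ∑ g ∈ A, (∑ h ∈ A, ‖U (g - h)‖ * ‖ψM w h‖) ^ 2
          ≤ CU * S0 * (CU * S0) * ∑ h ∈ A, ‖ψM w h‖ ^ 2 := hsch
        _ ≤ CU * S0 * (CU * S0) * (1 / γ) := by
            apply mul_le_mul_of_nonneg_left (hψl2 w) (mul_nonneg hCS0nn hCS0nn)
        _ = CU ^ 2 * S0 ^ 2 / γ := by ring
    have hQw' : ∑ g ∈ A, rho k₀ ν g * ‖cchi w g‖ ^ 2 ≤ CU ^ 2 * S0 ^ 2 / (γ * r0) := by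
      rw [← Finset.sum_coe_sort A (fun g => rho k₀ ν g * ‖cchi w g‖ ^ 2)]
      exact hQ w
    have hT2 : ∑ g ∈ A, (sig k₀ g) ^ 2 / rho k₀ ν g * ‖ψM w g‖ ^ 2
        ≤ 4 * CU ^ 2 * S0 ^ 2 / (γ ^ 2 * r0) := by
      have hpoint : ∀ g ∈ A, (sig k₀ g) ^ 2 / rho k₀ ν g * ‖ψM w g‖ ^ 2
          ≤ 2 * (rho k₀ ν g * ‖cchi w g‖ ^ 2)
            + 2 * ((∑ h ∈ A, ‖U (g - h)‖ * ‖ψM w h‖) ^ 2 / (γ * r0)) := by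
        intro g hg
        have hρg := hrhopos g hg
        have hρgA := hrhoA g hg
        have hne : ((rho k₀ ν g : ℝ) : ℂ) ≠ 0 := Complex.ofReal_ne_zero.mpr hρg.ne'
        have hid : ((sig k₀ g : ℝ) : ℂ) * ψM w g
            = ((rho k₀ ν g : ℝ) : ℂ) * cchi w g - ∑ h ∈ A, U (g - h) * ψM w h := by
          rw [hcchidef]
          simp only
          field_simp
          ring
        have hnorm : |sig k₀ g| * ‖ψM w g‖ ≤ rho k₀ ν g * ‖cchi w g‖
            + ∑ h ∈ A, ‖U (g - h)‖ * ‖ψM w h‖ := by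
          have h1 : ‖((sig k₀ g : ℝ) : ℂ) * ψM w g‖ = |sig k₀ g| * ‖ψM w g‖ := by
            rw [norm_mul, Complex.norm_real, Real.norm_eq_abs]
          calc |sig k₀ g| * ‖ψM w g‖
              = ‖((rho k₀ ν g : ℝ) : ℂ) * cchi w g - ∑ h ∈ A, U (g - h) * ψM w h‖ := by
                rw [← h1, hid]
            _ ≤ ‖((rho k₀ ν g : ℝ) : ℂ) * cchi w g‖ + ‖∑ h ∈ A, U (g - h) * ψM w h‖ :=
                norm_sub_le _ _
            _ ≤ rho k₀ ν g * ‖cchi w g‖ + ∑ h ∈ A, ‖U (g - h)‖ * ‖ψM w h‖ := by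
                apply add_le_add
                · rw [norm_mul, Complex.norm_real, Real.norm_eq_abs, abs_of_pos hρg]
                · calc ‖∑ h ∈ A, U (g - h) * ψM w h‖
                      ≤ ∑ h ∈ A, ‖U (g - h) * ψM w h‖ := norm_sum_le _ _
                    _ = ∑ h ∈ A, ‖U (g - h)‖ * ‖ψM w h‖ := by
                        exact Finset.sum_congr rfl fun h _ => norm_mul _ _
        set p : ℝ := rho k₀ ν g
        set n : ℝ := ‖ψM w g‖
        set c : ℝ := ‖cchi w g‖
        set S : ℝ := ∑ h ∈ A, ‖U (g - h)‖ * ‖ψM w h‖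
        have hSnn : 0 ≤ S :=
          Finset.sum_nonneg fun h _ => mul_nonneg (norm_nonneg _) (norm_nonneg _)
        have hcnn : 0 ≤ c := norm_nonneg _
        have hnnn : 0 ≤ n := norm_nonneg _
        have he1 : (sig k₀ g) ^ 2 = |sig k₀ g| ^ 2 := (sq_abs _).symm
        rw [he1, div_mul_eq_mul_div, div_le_iff₀ hρg]
        have hx : (|sig k₀ g| * n) ^ 2 ≤ (p * c + S) ^ 2 :=
          pow_le_pow_left₀ (mul_nonneg (abs_nonneg _) hnnn) hnorm 2
        have hy : (p * c + S) ^ 2 ≤ 2 * (p * c) ^ 2 + 2 * S ^ 2 := by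
          nlinarith [sq_nonneg (p * c - S)]
        have h2 : (|sig k₀ g| * n) ^ 2 ≤ 2 * (p * c) ^ 2 + 2 * S ^ 2 := le_trans hx hy
        have h4 : S ^ 2 ≤ S ^ 2 / (γ * r0) * p := by
          rw [div_mul_eq_mul_div, le_div_iff₀ hγr0]
          exact mul_le_mul_of_nonneg_left hρgA (sq_nonneg S)
        have e5 : (|sig k₀ g| * n) ^ 2 = |sig k₀ g| ^ 2 * n ^ 2 := by ring
        have e6 : (2 * (p * c ^ 2) + 2 * (S ^ 2 / (γ * r0))) * p
            = 2 * (p * c) ^ 2 + 2 * (S ^ 2 / (γ * r0) * p) := by ring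
        rw [e6]
        rw [e5] at h2
        linarith
      calc ∑ g ∈ A, (sig k₀ g) ^ 2 / rho k₀ ν g * ‖ψM w g‖ ^ 2
          ≤ ∑ g ∈ A, (2 * (rho k₀ ν g * ‖cchi w g‖ ^ 2)
              + 2 * ((∑ h ∈ A, ‖U (g - h)‖ * ‖ψM w h‖) ^ 2 / (γ * r0))) :=
            Finset.sum_le_sum hpoint
        _ = 2 * (∑ g ∈ A, rho k₀ ν g * ‖cchi w g‖ ^ 2)
            + 2 * ((∑ g ∈ A, (∑ h ∈ A, ‖U (g - h)‖ * ‖ψM w h‖) ^ 2) / (γ * r0)) := by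
            rw [Finset.sum_add_distrib, ← Finset.mul_sum, ← Finset.mul_sum,
              ← Finset.sum_div]
        _ ≤ 2 * (CU ^ 2 * S0 ^ 2 / (γ * r0))
            + 2 * ((CU ^ 2 * S0 ^ 2 / γ) / (γ * r0)) := by
            apply add_le_add
            · exact mul_le_mul_of_nonneg_left hQw' (by norm_num)
            · apply mul_le_mul_of_nonneg_left _ (by norm_num)
              exact (div_le_div_iff_of_pos_right hγr0).mpr hB2
        _ ≤ 4 * CU ^ 2 * S0 ^ 2 / (γ ^ 2 * r0) := by
            have e1 : 2 * ((CU ^ 2 * S0 ^ 2 / γ) / (γ * r0))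
                = 2 * CU ^ 2 * S0 ^ 2 / (γ ^ 2 * r0) := by
              field_simp
            have e2 : 2 * (CU ^ 2 * S0 ^ 2 / (γ * r0))
                ≤ 2 * CU ^ 2 * S0 ^ 2 / (γ ^ 2 * r0) := by
              rw [show 2 * (CU ^ 2 * S0 ^ 2 / (γ * r0)) = 2 * CU ^ 2 * S0 ^ 2 / (γ * r0) by ring]
              apply div_le_div_of_nonneg_left (by positivity) (mul_pos (pow_pos hγ0 2) hr0) ?_
              nlinarith [hr0, hγ0, hγ1]
            rw [e1]
            have e3 : 4 * CU ^ 2 * S0 ^ 2 / (γ ^ 2 * r0)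
                = 2 * CU ^ 2 * S0 ^ 2 / (γ ^ 2 * r0) + 2 * CU ^ 2 * S0 ^ 2 / (γ ^ 2 * r0) := by
              ring
            rw [e3]
            exact add_le_add e2 (le_refl _)
    have hR2 : ∑ h ∈ Rf, ‖ψM w h‖ ^ 2 ≤ CU ^ 2 * S0 ^ 2 / (st ^ 2 * γ ^ 3 * r0 ^ 2) := by
      have hptR : ∀ h ∈ Rf, ‖ψM w h‖ ^ 2
          ≤ (sig k₀ h) ^ 2 / rho k₀ ν h * ‖ψM w h‖ ^ 2 / (4 * st ^ 2 * (γ * r0)) := by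
        intro h hh
        have hhA : h ∈ A := (Finset.mem_sdiff.mp hh).1
        have hhnEf : h ∉ Ef := (Finset.mem_sdiff.mp hh).2
        have hρh := hrhopos h hhA
        have hρhA := hrhoA h hhA
        have hcond : st ≤ |sig k₀ h| / (2 * rho k₀ ν h) := by
          by_contra hc
          push_neg at hc
          exact hhnEf ((hEfmem h).mpr ⟨(hAmem h).mp hhA, hc⟩)
        have h2st : st * (2 * rho k₀ ν h) ≤ |sig k₀ h| :=
          (le_div_iff₀ (by linarith : (0:ℝ) < 2 * rho k₀ ν h)).mp hcond
        have hsq : 4 * st ^ 2 * rho k₀ ν h ^ 2 ≤ (sig k₀ h) ^ 2 := by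
          rw [← sq_abs (sig k₀ h)]
          have hnn2 : (0:ℝ) ≤ st * (2 * rho k₀ ν h) :=
            mul_nonneg hst.le (by linarith)
          have := pow_le_pow_left₀ hnn2 h2st 2
          calc 4 * st ^ 2 * rho k₀ ν h ^ 2 = (st * (2 * rho k₀ ν h)) ^ 2 := by ring
            _ ≤ |sig k₀ h| ^ 2 := this
        have h4stρ : (0:ℝ) ≤ 4 * st ^ 2 * rho k₀ ν h :=
          mul_nonneg (mul_nonneg (by norm_num) (sq_nonneg st)) hρh.le
        have h5 : 4 * st ^ 2 * (γ * r0) ≤ (sig k₀ h) ^ 2 / rho k₀ ν h := by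
          rw [le_div_iff₀ hρh]
          calc 4 * st ^ 2 * (γ * r0) * rho k₀ ν h
              = (4 * st ^ 2 * rho k₀ ν h) * (γ * r0) := by ring
            _ ≤ (4 * st ^ 2 * rho k₀ ν h) * rho k₀ ν h :=
                mul_le_mul_of_nonneg_left hρhA h4stρ
            _ = 4 * st ^ 2 * rho k₀ ν h ^ 2 := by ring
            _ ≤ (sig k₀ h) ^ 2 := hsq
        rw [le_div_iff₀ h4stpos]
        calc ‖ψM w h‖ ^ 2 * (4 * st ^ 2 * (γ * r0))
            ≤ ‖ψM w h‖ ^ 2 * ((sig k₀ h) ^ 2 / rho k₀ ν h) :=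
              mul_le_mul_of_nonneg_left h5 (sq_nonneg _)
          _ = (sig k₀ h) ^ 2 / rho k₀ ν h * ‖ψM w h‖ ^ 2 := by ring
      calc ∑ h ∈ Rf, ‖ψM w h‖ ^ 2
          ≤ ∑ h ∈ Rf, (sig k₀ h) ^ 2 / rho k₀ ν h * ‖ψM w h‖ ^ 2 / (4 * st ^ 2 * (γ * r0)) :=
            Finset.sum_le_sum hptR
        _ = (∑ h ∈ Rf, (sig k₀ h) ^ 2 / rho k₀ ν h * ‖ψM w h‖ ^ 2) / (4 * st ^ 2 * (γ * r0)) :=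
            (Finset.sum_div _ _ _).symm
        _ ≤ (∑ h ∈ A, (sig k₀ h) ^ 2 / rho k₀ ν h * ‖ψM w h‖ ^ 2) / (4 * st ^ 2 * (γ * r0)) := by
            apply (div_le_div_iff_of_pos_right h4stpos).mpr
            apply Finset.sum_le_sum_of_subset_of_nonneg Finset.sdiff_subset
            intro g hgA _
            exact mul_nonneg (div_nonneg (sq_nonneg _) (hrhopos g hgA).le) (sq_nonneg _)
        _ ≤ (4 * CU ^ 2 * S0 ^ 2 / (γ ^ 2 * r0)) / (4 * st ^ 2 * (γ * r0)) :=
            (div_le_div_iff_of_pos_right h4stpos).mpr hT2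
        _ = CU ^ 2 * S0 ^ 2 / (st ^ 2 * γ ^ 3 * r0 ^ 2) := by
            field_simp [hst.ne', hγ0.ne', hr0.ne']
    -- assemble the forcing bound
    have hsch2 := Stmt9Aux.schur Ef Rf (fun g h => ‖U (g - h)‖) (fun h => ‖ψM w h‖)
      (fun g _ h _ => norm_nonneg _) (fun h _ => norm_nonneg _)
      (CU * (S0 - 1)) (CU * (S0 - 1))
      (mul_nonneg hCU.le hS0m1) (mul_nonneg hCU.le hS0m1) hrowER hcolER
    calc ∑ g : Ef, ‖(-(∑ h ∈ Rf, U ((g : V d) - h) * ψM w h) : ℂ)‖ ^ 2 / rho k₀ ν (g : V d)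
        = ∑ g ∈ Ef, ‖(-(∑ h ∈ Rf, U (g - h) * ψM w h) : ℂ)‖ ^ 2 / rho k₀ ν g :=
          Finset.sum_coe_sort Ef (fun g => ‖(-(∑ h ∈ Rf, U (g - h) * ψM w h) : ℂ)‖ ^ 2 / rho k₀ ν g)
      _ ≤ ∑ g ∈ Ef, (∑ h ∈ Rf, ‖U (g - h)‖ * ‖ψM w h‖) ^ 2 / (γ * r0) := by
          apply Finset.sum_le_sum
          intro g hg
          have hnm : ‖(-(∑ h ∈ Rf, U (g - h) * ψM w h) : ℂ)‖
              ≤ ∑ h ∈ Rf, ‖U (g - h)‖ * ‖ψM w h‖ := by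
            rw [norm_neg]
            calc ‖∑ h ∈ Rf, U (g - h) * ψM w h‖ ≤ ∑ h ∈ Rf, ‖U (g - h) * ψM w h‖ :=
                  norm_sum_le _ _
              _ = ∑ h ∈ Rf, ‖U (g - h)‖ * ‖ψM w h‖ :=
                  Finset.sum_congr rfl fun h _ => norm_mul _ _
          apply div_le_div₀ (sq_nonneg _) _ hγr0 (hrhoA g (hEA hg))
          exact pow_le_pow_left₀ (norm_nonneg _) hnm 2
      _ = (∑ g ∈ Ef, (∑ h ∈ Rf, ‖U (g - h)‖ * ‖ψM w h‖) ^ 2) / (γ * r0) :=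
          (Finset.sum_div _ _ _).symm
      _ ≤ (CU * (S0 - 1) * (CU * (S0 - 1)) * ∑ h ∈ Rf, ‖ψM w h‖ ^ 2) / (γ * r0) :=
          (div_le_div_iff_of_pos_right hγr0).mpr hsch2
      _ ≤ (CU * (S0 - 1) * (CU * (S0 - 1)) * (CU ^ 2 * S0 ^ 2 / (st ^ 2 * γ ^ 3 * r0 ^ 2))) / (γ * r0) := by
          apply (div_le_div_iff_of_pos_right hγr0).mpr
          apply mul_le_mul_of_nonneg_left hR2
          exact mul_nonneg (mul_nonneg hCU.le hS0m1) (mul_nonneg hCU.le hS0m1)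
      _ = K ^ 2 := by
          rw [hK2]
          field_simp [hst.ne', hγ0.ne', hr0.ne']
  -- the Ewald system: derivative of the difference
  have huE : ∀ (w : ℝ) (g : Ef), HasDerivAt (fun t => ψEw t (g : V d) - ψM t (g : V d))
      (((π / rho k₀ ν (g : V d) : ℝ) : ℂ) * (Complex.I *
        ((∑ h : Ef, HE g h * (ψEw w (h : V d) - ψM w (h : V d)))
          + -(∑ h ∈ Rf, U ((g : V d) - h) * ψM w h)))) w := by
    intro w g
    have hgEw : (g : V d) ∈ Ew := (hEfmem _).mp g.2
    have hgGM : (g : V d) ∈ GMball Λ M := hEwsub hgEw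
    have h1 := (hψEw w (g : V d) hgEw).2
    have h2 := (hψM w (g : V d) hgGM).2
    rw [htsumEw w (g : V d)] at h1
    rw [htsumA w (g : V d)] at h2
    have h3 := h1.sub h2
    refine h3.congr_deriv ?_
    rw [hHEsum g (fun x => ψEw w x - ψM w x)]
    have hsplitA : ∑ h ∈ A, U ((g : V d) - h) * ψM w h
        = ∑ h ∈ Rf, U ((g : V d) - h) * ψM w h + ∑ h ∈ Ef, U ((g : V d) - h) * ψM w h := by
      rw [hRfdef]
      exact (Finset.sum_sdiff hEA).symm
    rw [hsplitA]
    have hsplit2 : ∑ h ∈ Ef, U ((g : V d) - h) * (ψEw w h - ψM w h)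
        = ∑ h ∈ Ef, U ((g : V d) - h) * ψEw w h - ∑ h ∈ Ef, U ((g : V d) - h) * ψM w h := by
      rw [← Finset.sum_sub_distrib]
      exact Finset.sum_congr rfl fun h _ => by ring
    rw [hsplit2]
    ring
  have hu0E : ∀ g : Ef, ψEw 0 (g : V d) - ψM 0 (g : V d) = 0 := by
    intro g
    have hgEw : (g : V d) ∈ Ew := (hEfmem _).mp g.2
    rw [hψEw0 (g : V d) hgEw, hψM0 (g : V d) (hEwsub hgEw), sub_self]
  have hmain := Stmt9Aux.forced (fun g : Ef => rho k₀ ν (g : V d))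
    (fun g => hrhopos _ (hEA g.2)) HE hHEherm
    (fun w g => ψEw w (g : V d) - ψM w (g : V d))
    (fun w g => -(∑ h ∈ Rf, U ((g : V d) - h) * ψM w h)) K hKnn huE hu0E hforce z
  calc Real.sqrt (∑' g : Ew, rho k₀ ν (g : V d) * ‖ψEw z (g : V d) - ψM z (g : V d)‖ ^ 2)
      = Real.sqrt (∑ g : Ef, rho k₀ ν (g : V d) * ‖ψEw z (g : V d) - ψM z (g : V d)‖ ^ 2) := by
        rw [Stmt9Aux.tsum_set_finite hfinEw (fun x => rho k₀ ν x * ‖ψEw z x - ψM z x‖ ^ 2),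
          ← Finset.sum_coe_sort Ef (fun x => rho k₀ ν x * ‖ψEw z x - ψM z x‖ ^ 2)]
    _ ≤ π * K * |z| := hmain
    _ = |z| * (π / st) * (CU ^ 2 * (S0 - 1) * S0 / (γ ^ 2 * r0 ^ 2)) * Real.sqrt r0 := by
        rw [hKdef]
        ring
end
end

section
/- Let γ ∈ (0,1) and G ⊆ G_γ with 0 ∈ G, and let ψ be a tame strong solution of DHW_G with ψ(0) = δ. Define ψ̂₀(z) := exp(i·π·U(0)·z/ρ₀) (note that U(0) is real, and ψ̂₀ is the solution of the free-beam equation (ρ₀/π)·ψ̂₀′ = i·U(0)·ψ̂₀ with ψ̂₀(0) = 1), and set N_cpl := π·C_U·(𝔖₀(α_U)−1)/(γ·ρ₀). Then for all z ∈ ℝ: |ψ̂₀(z) − ψ₀(z)| ≤ min{N_cpl·|z|, 2} and (Σ_{g∈G, g≠0} ρ_g·|ψ_g(z)|²)^{1/2} ≤ min{N_cpl·|z|, 1}·√ρ₀. -/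
noncomputable section

open scoped RealInnerProductSpace BigOperators
open Real

lemma summable_exp_int {β : ℝ} (hβ : 0 < β) :
    Summable fun n : ℤ => Real.exp (-β * |(n : ℝ)|) := by
  have h : ∀ n : ℕ, Real.exp (-β * (n : ℝ)) = Real.exp (-β) ^ n := by
    intro n; rw [← Real.exp_nat_mul]; ring_nf
  have hgeo : Summable fun n : ℕ => Real.exp (-β) ^ n :=
    summable_geometric_of_lt_one (Real.exp_nonneg _)
      (Real.exp_lt_one_iff.2 (neg_neg_of_pos hβ))
  apply Summable.of_nat_of_neg
  · exact hgeo.congr fun n => by rw [← h]; norm_num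
  · exact hgeo.congr fun n => by rw [← h]; push_cast; rw [abs_neg, Nat.abs_cast]

lemma summable_exp_pi : ∀ (n : ℕ) {β : ℝ}, 0 < β →
    Summable fun c : Fin n → ℤ => Real.exp (-β * ∑ i, |(c i : ℝ)|) := by
  intro n
  induction n with
  | zero => intro β hβ; exact .of_finite
  | succ n ih =>
    intro β hβ
    have h2 : Summable fun p : ℤ × (Fin n → ℤ) =>
        Real.exp (-β * |(p.1 : ℝ)|) * Real.exp (-β * ∑ i, |(p.2 i : ℝ)|) :=
      (summable_exp_int hβ).mul_of_nonneg (ih hβ)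
        (fun _ => Real.exp_nonneg _) (fun _ => Real.exp_nonneg _)
    have := (Fin.consEquiv fun _ => ℤ).symm.summable_iff.2 h2
    refine this.congr fun c => ?_
    show Real.exp (-β * |(((Fin.consEquiv fun _ => ℤ).symm c).1 : ℝ)|) *
      Real.exp (-β * ∑ i, |((((Fin.consEquiv fun _ => ℤ).symm c).2 : Fin n → ℤ) i : ℝ)|) = _
    rw [Fin.consEquiv_symm_apply]
    rw [← Real.exp_add, Fin.sum_univ_succ]
    congr 1
    simp [Fin.tail]
    ring

lemma lattice_summable {d : ℕ} {Λ : Set (V d)} (hΛ : IsLattice Λ) {β : ℝ} (hβ : 0 < β) :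
    Summable fun κ : Λ => Real.exp (-β * ‖(κ : V d)‖) := by
  obtain ⟨b, rfl⟩ := hΛ
  set f : (Fin d → ℤ) → V d := fun c => ∑ i, (c i : ℝ) • b i with hf
  have hfe : ∀ c, f c = b.equivFun.symm (fun i => (c i : ℝ)) := by
    intro c; rw [Module.Basis.equivFun_symm_apply]
  have hinj : Function.Injective f := by
    intro c c' h
    rw [hfe, hfe] at h
    have := b.equivFun.symm.injective h
    funext i
    exact_mod_cast congrFun this i
  set C : ℝ := ‖(b.equivFunL.toContinuousLinearMap : V d →L[ℝ] (Fin d → ℝ))‖ with hC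
  have hbound : ∀ c : Fin d → ℤ, (∑ i, |(c i : ℝ)|) ≤ (d + 1) * (C + 1) * ‖f c‖ := by
    intro c
    have hcoord : ∀ i, |(c i : ℝ)| ≤ (C + 1) * ‖f c‖ := by
      intro i
      have h1 : b.equivFunL (f c) = fun i => (c i : ℝ) := by
        rw [hfe]; exact b.equivFun.apply_symm_apply _
      have h2 : ‖b.equivFunL (f c)‖ ≤ C * ‖f c‖ :=
        b.equivFunL.toContinuousLinearMap.le_opNorm _
      have h3 : |(c i : ℝ)| ≤ ‖b.equivFunL (f c)‖ := by
        rw [h1]; exact norm_le_pi_norm (fun i => (c i : ℝ)) i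
      nlinarith [norm_nonneg (f c)]
    calc (∑ i, |(c i : ℝ)|) ≤ ∑ _i : Fin d, (C + 1) * ‖f c‖ :=
          Finset.sum_le_sum (fun i _ => hcoord i)
      _ = d * ((C + 1) * ‖f c‖) := by simp [mul_comm]
      _ ≤ (d + 1) * (C + 1) * ‖f c‖ := by
          have hC1 : (0:ℝ) ≤ C + 1 := by positivity
          nlinarith [norm_nonneg (f c), hC1]
  have hD : (0:ℝ) < (d + 1) * (C + 1) := by positivity
  have hsum : Summable fun c : Fin d → ℤ => Real.exp (-β * ‖f c‖) := by
    refine Summable.of_nonneg_of_le (fun _ => Real.exp_nonneg _) (fun c => ?_)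
      (summable_exp_pi d (β := β / ((d + 1) * (C + 1))) (by positivity))
    apply Real.exp_le_exp.2
    have h1 : β / ((d + 1) * (C + 1)) * (∑ i, |(c i : ℝ)|) ≤ β * ‖f c‖ := by
      rw [div_mul_eq_mul_div, div_le_iff₀ hD]
      calc β * (∑ i, |(c i : ℝ)|) ≤ β * ((d + 1) * (C + 1) * ‖f c‖) :=
            mul_le_mul_of_nonneg_left (hbound c) hβ.le
        _ = β * ‖f c‖ * ((d + 1) * (C + 1)) := by ring
    linarith
  set e : (Fin d → ℤ) ≃ {x : V d | ∃ c : Fin d → ℤ, x = ∑ i, (c i : ℝ) • b i} :=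
    Equiv.ofBijective (fun c => ⟨f c, c, rfl⟩)
      ⟨fun c c' h => hinj (congrArg Subtype.val h),
       fun κ => by obtain ⟨c, hc⟩ := κ.2; exact ⟨c, Subtype.ext hc.symm⟩⟩
  rw [← e.summable_iff]
  exact hsum

lemma lattice_zero_mem {d : ℕ} {Λ : Set (V d)} (hΛ : IsLattice Λ) : (0 : V d) ∈ Λ := by
  obtain ⟨b, rfl⟩ := hΛ
  exact ⟨0, by simp⟩

lemma lattice_sub_mem {d : ℕ} {Λ : Set (V d)} (hΛ : IsLattice Λ) {x y : V d}
    (hx : x ∈ Λ) (hy : y ∈ Λ) : x - y ∈ Λ := by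
  obtain ⟨b, rfl⟩ := hΛ
  obtain ⟨c, rfl⟩ := hx
  obtain ⟨c', rfl⟩ := hy
  refine ⟨c - c', ?_⟩
  rw [← Finset.sum_sub_distrib]
  refine Finset.sum_congr rfl fun i _ => ?_
  have : ((c - c') i : ℝ) = (c i : ℝ) - (c' i : ℝ) := by simp [Pi.sub_apply]
  rw [this, sub_smul]

lemma lattice_neg_mem {d : ℕ} {Λ : Set (V d)} (hΛ : IsLattice Λ) {x : V d}
    (hx : x ∈ Λ) : -x ∈ Λ := by
  have := lattice_sub_mem hΛ (lattice_zero_mem hΛ) hx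
  simpa using this

/-- Coordinate evaluation as a continuous ℝ-linear map on `lp _ 2`. -/
def evalCLM {ι : Type*} (g : ι) : lp (fun _ : ι => ℂ) 2 →L[ℝ] ℂ :=
  ContinuousLinearMap.restrictScalars ℝ
    (LinearMap.mkContinuous
      { toFun := fun f => f g
        map_add' := fun f h => by simp only [lp.coeFn_add, Pi.add_apply]
        map_smul' := fun c f => by simp only [lp.coeFn_smul, Pi.smul_apply, RingHom.id_apply, smul_eq_mul] }
      1 (fun f => by
        show ‖(f : ι → ℂ) g‖ ≤ 1 * ‖f‖
        simpa using lp.norm_apply_le_norm (by norm_num) f g) :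
      lp (fun _ : ι => ℂ) 2 →L[ℂ] ℂ)

@[simp] lemma evalCLM_apply {ι : Type*} (g : ι) (f : lp (fun _ : ι => ℂ) 2) :
    evalCLM g f = f g := rfl

lemma norm_sub_le_of_deriv_bound {E : Type*} [NormedAddCommGroup E] [NormedSpace ℝ E]
    {f : ℝ → E} {f' : ℝ → E} {C : ℝ}
    (hf : ∀ t, HasDerivAt f (f' t) t) (hb : ∀ t, ‖f' t‖ ≤ C) (z : ℝ) :
    ‖f z - f 0‖ ≤ C * |z| := by
  have := (convex_univ (𝕜 := ℝ) (E := ℝ)).norm_image_sub_le_of_norm_hasDerivWithin_le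
    (f' := f') (fun t _ => (hf t).hasDerivWithinAt) (fun t _ => hb t)
    (Set.mem_univ 0) (Set.mem_univ z)
  simpa [Real.norm_eq_abs] using this

lemma sqrt_bound_of_deriv {Q Q' : ℝ → ℝ} {K : ℝ} (hK : 0 ≤ K)
    (hQ : ∀ t, HasDerivAt Q (Q' t) t) (hQ0 : Q 0 = 0) (hQnn : ∀ t, 0 ≤ Q t)
    (hb : ∀ t, |Q' t| ≤ 2 * K * Real.sqrt (Q t)) (z : ℝ) :
    Real.sqrt (Q z) ≤ K * |z| := by
  refine le_of_forall_pos_le_add fun ε hε => ?_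
  set F : ℝ → ℝ := fun t => Real.sqrt (Q t + ε ^ 2) with hF
  have hFd : ∀ t, HasDerivAt F (Q' t / (2 * Real.sqrt (Q t + ε ^ 2))) t := by
    intro t
    have h0 := hQnn t
    exact (hQ t).add_const (ε ^ 2) |>.sqrt (by positivity)
  have hFb : ∀ t, ‖Q' t / (2 * Real.sqrt (Q t + ε ^ 2))‖ ≤ K := by
    intro t
    have h0 := hQnn t
    have hs : 0 < Real.sqrt (Q t + ε ^ 2) := Real.sqrt_pos.2 (by positivity)
    have h2s : (0:ℝ) < 2 * Real.sqrt (Q t + ε ^ 2) := by linarith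
    rw [Real.norm_eq_abs, abs_div, abs_of_pos h2s, div_le_iff₀ h2s]
    calc |Q' t| ≤ 2 * K * Real.sqrt (Q t) := hb t
      _ ≤ 2 * K * Real.sqrt (Q t + ε ^ 2) := by
          gcongr
          nlinarith [sq_nonneg ε]
      _ = K * (2 * Real.sqrt (Q t + ε ^ 2)) := by ring
  have hmv := norm_sub_le_of_deriv_bound hFd hFb z
  have hF0 : F 0 = ε := by
    simp only [hF, hQ0, zero_add]
    rw [Real.sqrt_sq hε.le]
  have h1 : Real.sqrt (Q z) ≤ F z := Real.sqrt_le_sqrt (by nlinarith [sq_nonneg ε])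
  have h2 : F z - F 0 ≤ K * |z| := le_trans (le_abs_self _) (by simpa using hmv)
  linarith

lemma re_I_helper (r : ℝ) (b t : ℂ) :
    ((r : ℂ) * (Complex.I * (b + t))).re = r * (Complex.I * t).re + r * (Complex.I * b).re := by
  simp [Complex.mul_re, Complex.mul_im, Complex.add_re, Complex.add_im]
  ring

lemma conserve_term_helper (r : ℝ) (hr : 0 < r) (σp : ℝ) (a t : ℂ) :
    ((starRingEnd ℂ) ((Real.sqrt r : ℂ) * a) *
       ((Real.sqrt r : ℂ) * (((π / r : ℝ) : ℂ) * (Complex.I * (((σp : ℝ) : ℂ) * a + t))))).re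
      = -π * ((starRingEnd ℂ) a * t).im := by
  have hrr : Real.sqrt r * Real.sqrt r = r := Real.mul_self_sqrt hr.le
  have hrne : r ≠ 0 := hr.ne'
  simp only [map_mul, Complex.conj_ofReal, Complex.mul_re, Complex.mul_im, Complex.add_re,
    Complex.add_im, Complex.I_re, Complex.I_im, Complex.ofReal_re, Complex.ofReal_im,
    Complex.conj_re, Complex.conj_im]
  field_simp
  ring_nf
  rw [Real.sq_sqrt hr.le]
  ring

lemma quad_re_helper (r s : ℝ) (a t : ℂ) :
    ((starRingEnd ℂ) a * ((r : ℂ) * (Complex.I * (((s : ℝ) : ℂ) * a + t)))).re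
      = r * (Complex.I * ((starRingEnd ℂ) a * t)).re := by
  simp only [Complex.mul_re, Complex.mul_im, Complex.add_re, Complex.add_im, Complex.I_re,
    Complex.I_im, Complex.ofReal_re, Complex.ofReal_im, Complex.conj_re, Complex.conj_im]
  ring

set_option maxHeartbeats 2000000 in
/-- Lemma 4.1, free-beam approximation:
for a tame strong solution `ψ` of `DHW_G` with `ψ(0) = δ`, the free beam
`ψ̂₀(z) = exp(iπU₀z/ρ₀)` satisfies `|ψ̂₀(z) - ψ₀(z)| ≤ min{N_cpl|z|, 2}` and
`‖ψ(z)|_{G∖{0}}‖ ≤ min{N_cpl|z|, 1}·√ρ₀`, with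
`N_cpl = π·C_U·(𝔖₀(α_U)-1)/(γ·ρ₀)`. -/
theorem stmt10 {d : ℕ} (hd : 0 < d) (Λ : Set (V d)) (hΛ : IsLattice Λ)
    (k₀ : V d) (hk : 0 < ⟪k₀, nu d hd⟫)
    (U : V d → ℂ) (hUsym : ∀ g ∈ Λ, U (-g) = starRingEnd ℂ (U g))
    (CU αU : ℝ) (hCU : 0 < CU) (hαU : 0 < αU)
    (hUbd : ∀ g ∈ Λ, ‖U g‖ ≤ CU * Real.exp (-αU * ‖g‖))
    (γ : ℝ) (hγ : γ ∈ Set.Ioo (0 : ℝ) 1)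
    (G : Set (V d)) (hG : G ⊆ Gset Λ k₀ (nu d hd) γ) (h0 : (0 : V d) ∈ G)
    (ψ : ℝ → V d → ℂ) (hψ : IsTameSol k₀ (nu d hd) U G ψ) (hinit : InitDelta G ψ) :
    ∀ z : ℝ,
      ‖Complex.exp (Complex.I * (π : ℂ) * U 0 * (z : ℂ) / (⟪k₀, nu d hd⟫ : ℝ)) - ψ z 0‖ ≤
        min (π * CU * (Sm Λ 0 αU - 1) / (γ * ⟪k₀, nu d hd⟫) * |z|) 2 ∧
      normOn k₀ (nu d hd) (G \ {0}) (ψ z) ≤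
        min (π * CU * (Sm Λ 0 αU - 1) / (γ * ⟪k₀, nu d hd⟫) * |z|) 1 *
          Real.sqrt ⟪k₀, nu d hd⟫ := by
  intro z
  classical
  obtain ⟨hγ0, hγ1⟩ := hγ
  obtain ⟨hDHW, hCurve, hTame⟩ := hψ
  obtain ⟨A, hAdiff, hAg0⟩ := hCurve
  set ν : V d := nu d hd with hν
  set ρ₀ : ℝ := ⟪k₀, ν⟫ with hρ₀def
  have hGΛ : ∀ g : V d, g ∈ G → g ∈ Λ := fun g hg => (hG hg).1
  have hρpos : ∀ g : ↥G, 0 < rho k₀ ν (g : V d) :=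
    fun g => lt_of_lt_of_le (by positivity) (hG g.2).2
  have hρ00 : rho k₀ ν (0 : V d) = ρ₀ := by
    rw [hρ₀def]; show ⟪k₀ + 0, ν⟫ = ⟪k₀, ν⟫; rw [add_zero]
  have hσ0 : sig k₀ (0 : V d) = 0 := by
    show ‖k₀‖ ^ 2 - ‖k₀ + 0‖ ^ 2 = 0
    rw [add_zero]; ring
  have hAg : ∀ (w : ℝ) (g : ↥G),
      A w g = ((Real.sqrt (rho k₀ ν (g : V d)) : ℝ) : ℂ) * ψ w (g : V d) := by
    intro w g; rw [hAg0 w g]; norm_num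
  set g₀ : ↥G := ⟨(0 : V d), h0⟩ with hg₀
  have hψ00 : ψ 0 (0 : V d) = 1 := by rw [hinit 0 h0]; simp
  set T : ℝ → ↥G → ℂ :=
    fun w g => ∑' h : ↥G, U ((g : V d) - (h : V d)) * ψ w (h : V d) with hTdef
  set D : ℝ → ↥G → ℂ := fun w g =>
    ((π / rho k₀ ν (g : V d) : ℝ) : ℂ) *
      (Complex.I * (((sig k₀ (g : V d) : ℝ) : ℂ) * ψ w (g : V d) + T w g)) with hDdef
  have hderiv : ∀ (w : ℝ) (g : ↥G), HasDerivAt (fun t => ψ t (g : V d)) (D w g) w :=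
    fun w g => (hDHW w g g.2).2
  have hTsummable : ∀ (w : ℝ) (g : ↥G),
      Summable fun h : ↥G => U ((g : V d) - (h : V d)) * ψ w (h : V d) :=
    fun w g => (hDHW w g g.2).1
  set A' : ℝ → lp (fun _ : ↥G => ℂ) 2 := fun w => deriv A w with hA'def
  have hA' : ∀ w, HasDerivAt A (A' w) w := fun w => (hAdiff w).hasDerivAt
  have hA'val : ∀ (w : ℝ) (g : ↥G),
      A' w g = ((Real.sqrt (rho k₀ ν (g : V d)) : ℝ) : ℂ) * D w g := by
    intro w g
    have h1 : HasDerivAt (fun t => A t g) (A' w g) w :=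
      (evalCLM (ι := ↥G) g).hasFDerivAt.comp_hasDerivAt w (hA' w)
    have h2 : HasDerivAt (fun t => ((Real.sqrt (rho k₀ ν (g : V d)) : ℝ) : ℂ) * ψ t (g : V d))
        (((Real.sqrt (rho k₀ ν (g : V d)) : ℝ) : ℂ) * D w g) w :=
      (hderiv w g).const_mul _
    have h3 : (fun t => ((Real.sqrt (rho k₀ ν (g : V d)) : ℝ) : ℂ) * ψ t (g : V d))
        = fun t => A t g := funext fun t => (hAg t g).symm
    rw [h3] at h2
    exact h1.unique h2
  -- inner product infrastructure
  have hinner_sum : ∀ x y : lp (fun _ : ↥G => ℂ) 2,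
      Summable fun g : ↥G => starRingEnd ℂ (x g) * y g := by
    intro x y
    have := lp.summable_inner (𝕜 := ℂ) x y
    simpa [RCLike.inner_apply, mul_comm] using this
  have hre_tsum : ∀ x y : lp (fun _ : ↥G => ℂ) 2, (inner ℂ x y : ℂ).re
      = ∑' g : ↥G, (starRingEnd ℂ (x g) * y g).re := by
    intro x y
    have h1 : (inner ℂ x y : ℂ) = ∑' g : ↥G, starRingEnd ℂ (x g) * y g := by
      rw [lp.inner_eq_tsum]
      exact tsum_congr fun g => by rw [RCLike.inner_apply']
    rw [h1]
    exact (Complex.reCLM.map_tsum (hinner_sum x y))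
  have hterm : ∀ (w : ℝ) (g : ↥G),
      (starRingEnd ℂ (A w g) * A w g).re = rho k₀ ν (g : V d) * ‖ψ w (g : V d)‖ ^ 2 := by
    intro w g
    have h1 : starRingEnd ℂ (A w g) * A w g = ((Complex.normSq (A w g) : ℝ) : ℂ) := by
      rw [mul_comm, Complex.mul_conj]
    rw [h1, Complex.ofReal_re, Complex.normSq_eq_norm_sq,
      hAg w g, norm_mul, mul_pow, Complex.norm_real, Real.norm_eq_abs,
      abs_of_nonneg (Real.sqrt_nonneg _), Real.sq_sqrt (hρpos g).le]
  have hMem : ∀ w, Summable fun g : ↥G => rho k₀ ν (g : V d) * ‖ψ w (g : V d)‖ ^ 2 := by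
    intro w
    have h1 : Summable fun g : ↥G => (starRingEnd ℂ (A w g) * A w g).re :=
      ((hinner_sum (A w) (A w)).hasSum.mapL Complex.reCLM).summable
    exact h1.congr fun g => hterm w g
  have hFval : ∀ w, (inner ℂ (A w) (A w) : ℂ).re
      = ∑' g : ↥G, rho k₀ ν (g : V d) * ‖ψ w (g : V d)‖ ^ 2 := by
    intro w; rw [hre_tsum (A w) (A w)]; exact tsum_congr fun g => hterm w g
  -- norm conservation
  have hre0 : ∀ w, (inner ℂ (A w) (A' w) : ℂ).re = 0 := by
    intro w
    set W : ↥G × ↥G → ℂ := fun q =>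
      starRingEnd ℂ (ψ w (q.1 : V d)) * (U ((q.1 : V d) - (q.2 : V d)) * ψ w (q.2 : V d))
      with hWdef
    have hWsum : Summable W := by
      apply Summable.of_norm
      refine ((hTame w).2).congr fun q => ?_
      rw [hWdef]
      simp only [norm_mul, RingHomIsometric.norm_map]
      ring
    have hfiber : ∀ g : ↥G, HasSum (fun h : ↥G => W (g, h))
        (starRingEnd ℂ (ψ w (g : V d)) * T w g) := by
      intro g
      have := (hTsummable w g).hasSum.mul_left (starRingEnd ℂ (ψ w (g : V d)))
      simpa [hWdef, hTdef] using this
    have hgsum : HasSum (fun g : ↥G => starRingEnd ℂ (ψ w (g : V d)) * T w g) (∑' q, W q) :=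
      HasSum.prod_fiberwise hWsum.hasSum hfiber
    have hSim : (∑' q, W q).im = 0 := by
      have hconjS : starRingEnd ℂ (∑' q, W q) = ∑' q, W q := by
        have h1 : starRingEnd ℂ (∑' q, W q) = ∑' q, starRingEnd ℂ (W q) :=
          Complex.conjCLE.toContinuousLinearMap.map_tsum hWsum
        rw [h1]
        have h2 : ∀ q : ↥G × ↥G, starRingEnd ℂ (W q) = W (q.2, q.1) := by
          intro q
          have hmem : (q.1 : V d) - (q.2 : V d) ∈ Λ :=
            lattice_sub_mem hΛ (hGΛ _ q.1.2) (hGΛ _ q.2.2)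
          have hU : starRingEnd ℂ (U ((q.1 : V d) - (q.2 : V d)))
              = U ((q.2 : V d) - (q.1 : V d)) := by
            have h3 := hUsym _ hmem
            rw [neg_sub] at h3
            exact h3.symm
          rw [hWdef]
          simp only [map_mul, hU, Complex.conj_conj]
          ring
        rw [tsum_congr h2]
        have := (Equiv.prodComm ↥G ↥G).tsum_eq W
        simpa [Equiv.prodComm_apply, Prod.swap] using this
      have := Complex.conj_eq_iff_im.mp hconjS
      exact this
    rw [hre_tsum (A w) (A' w)]
    have hterm2 : ∀ g : ↥G, (starRingEnd ℂ (A w g) * A' w g).re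
        = -π * (starRingEnd ℂ (ψ w (g : V d)) * T w g).im := by
      intro g
      rw [hAg w g, hA'val w g, hDdef]
      exact conserve_term_helper _ (hρpos g) _ _ _
    rw [tsum_congr hterm2, tsum_mul_left]
    have him : (∑' g : ↥G, (starRingEnd ℂ (ψ w (g : V d)) * T w g).im) = 0 := by
      have := (hgsum.mapL Complex.imCLM).tsum_eq
      simpa [hSim] using this
    rw [him, mul_zero]
  have hδ : (inner ℂ (A 0) (A 0) : ℂ).re = ρ₀ := by
    rw [hFval]
    rw [tsum_eq_single g₀ ?_]
    · rw [show ((g₀ : ↥G) : V d) = (0 : V d) from rfl, hρ00, hψ00]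
      norm_num
    · intro g hgne
      have hne : (g : V d) ≠ 0 := fun h => hgne (Subtype.ext h)
      rw [hinit _ g.2, if_neg hne]
      simp
  have hcons : ∀ w, (∑' g : ↥G, rho k₀ ν (g : V d) * ‖ψ w (g : V d)‖ ^ 2) = ρ₀ := by
    have hder0 : ∀ w, HasDerivAt (fun t => (inner ℂ (A t) (A t) : ℂ).re) 0 w := by
      intro w
      have h1 : HasDerivAt (fun t => (inner ℂ (A t) (A t) : ℂ))
          ((inner ℂ (A w) (A' w) : ℂ) + (inner ℂ (A' w) (A w) : ℂ)) w :=
        HasDerivAt.inner ℂ (hA' w) (hA' w)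
      have h2 := Complex.reCLM.hasFDerivAt.comp_hasDerivAt w h1
      have h3 : ((inner ℂ (A w) (A' w) : ℂ) + (inner ℂ (A' w) (A w) : ℂ)).re = 0 := by
        have h4 : (inner ℂ (A' w) (A w) : ℂ) = starRingEnd ℂ (inner ℂ (A w) (A' w) : ℂ) :=
          (inner_conj_symm _ _).symm
        rw [Complex.add_re, h4, Complex.conj_re, hre0 w]
        norm_num
      have h2' : HasDerivAt (fun t => (inner ℂ (A t) (A t) : ℂ).re)
          (((inner ℂ (A w) (A' w) : ℂ) + (inner ℂ (A' w) (A w) : ℂ)).re) w := h2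
      rw [h3] at h2'
      exact h2'
    intro w
    have hmv := norm_sub_le_of_deriv_bound (C := 0) hder0 (fun t => by simp) w
    simp only [zero_mul, Real.norm_eq_abs] at hmv
    have heq : (inner ℂ (A w) (A w) : ℂ).re = (inner ℂ (A 0) (A 0) : ℂ).re := by
      have := abs_nonneg ((inner ℂ (A w) (A w) : ℂ).re - (inner ℂ (A 0) (A 0) : ℂ).re)
      have habs : |(inner ℂ (A w) (A w) : ℂ).re - (inner ℂ (A 0) (A 0) : ℂ).re| ≤ 0 := hmv
      have := abs_eq_zero.mp (le_antisymm habs (abs_nonneg _))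
      linarith [this]
    rw [← hFval, heq, hδ]
  -- pointwise bounds
  have hptle : ∀ (w : ℝ) (g : ↥G), rho k₀ ν (g : V d) * ‖ψ w (g : V d)‖ ^ 2 ≤ ρ₀ := by
    intro w g
    rw [← hcons w]
    exact Summable.le_tsum (hMem w) g fun j _ => mul_nonneg (hρpos j).le (by positivity)
  have hψ0sq : ∀ w, ρ₀ * ‖ψ w (0 : V d)‖ ^ 2 ≤ ρ₀ := by
    intro w
    have := hptle w g₀
    rwa [show ((g₀ : ↥G) : V d) = (0 : V d) from rfl, hρ00] at this
  have hψ0le : ∀ w, ‖ψ w (0 : V d)‖ ≤ 1 := by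
    intro w
    have h1 := hψ0sq w
    have h2 : ‖ψ w (0 : V d)‖ ^ 2 ≤ 1 := le_of_mul_le_mul_left (by linarith) hk
    nlinarith [norm_nonneg (ψ w (0 : V d)), sq_nonneg (‖ψ w (0 : V d)‖ - 1)]
  have hψleγ : ∀ (w : ℝ) (g : ↥G), ‖ψ w (g : V d)‖ ≤ (Real.sqrt γ)⁻¹ := by
    intro w g
    have h1 : γ * ρ₀ * ‖ψ w (g : V d)‖ ^ 2 ≤ ρ₀ := by
      have h2 : γ * ρ₀ ≤ rho k₀ ν (g : V d) := (hG g.2).2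
      nlinarith [hptle w g, sq_nonneg ‖ψ w (g : V d)‖]
    have hsγ : Real.sqrt γ * Real.sqrt γ = γ := Real.mul_self_sqrt hγ0.le
    have h3 : γ * ‖ψ w (g : V d)‖ ^ 2 ≤ 1 := le_of_mul_le_mul_left (by nlinarith) hk
    have h2 : ‖ψ w (g : V d)‖ ^ 2 ≤ ((Real.sqrt γ)⁻¹) ^ 2 := by
      rw [inv_pow, Real.sq_sqrt hγ0.le, inv_eq_one_div, le_div_iff₀ hγ0]
      linarith
    calc ‖ψ w (g : V d)‖ = Real.sqrt (‖ψ w (g : V d)‖ ^ 2) := (Real.sqrt_sq (norm_nonneg _)).symm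
      _ ≤ Real.sqrt (((Real.sqrt γ)⁻¹) ^ 2) := Real.sqrt_le_sqrt h2
      _ = (Real.sqrt γ)⁻¹ := Real.sqrt_sq (by positivity)
  -- lattice sums
  have h0Λ : (0 : V d) ∈ Λ := lattice_zero_mem hΛ
  set κ₀ : ↥Λ := ⟨(0 : V d), h0Λ⟩ with hκ₀
  have hsumΛ : Summable fun κ : ↥Λ => Real.exp (-αU * ‖(κ : V d)‖) := lattice_summable hΛ hαU
  have hSval : Sm Λ 0 αU = ∑' κ : ↥Λ, Real.exp (-αU * ‖(κ : V d)‖) := by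
    unfold Sm; exact tsum_congr fun κ => by rw [pow_zero, one_mul]
  have hS1 : 1 ≤ Sm Λ 0 αU := by
    rw [hSval]
    have := Summable.le_tsum hsumΛ κ₀ fun j _ => Real.exp_nonneg _
    simpa [hκ₀] using this
  set Sm' : ℝ := Sm Λ 0 αU - 1 with hSm'def
  have hSm'0 : 0 ≤ Sm' := by rw [hSm'def]; linarith
  set E : ↥Λ → ℝ := fun κ => if (κ : V d) = 0 then 0 else Real.exp (-αU * ‖(κ : V d)‖)
    with hEdef
  have hEsum : Summable E := by
    refine Summable.of_nonneg_of_le (fun κ => ?_) (fun κ => ?_) hsumΛ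
    · rw [hEdef]; dsimp only; split <;> positivity
    · rw [hEdef]; dsimp only; split
      · positivity
      · exact le_rfl
  have hEeq : (∑' κ, E κ) = Sm' := by
    have h1 := Summable.tsum_eq_add_tsum_ite hsumΛ κ₀
    have h2 : ∀ κ : ↥Λ, (if κ = κ₀ then 0 else Real.exp (-αU * ‖(κ : V d)‖)) = E κ := by
      intro κ
      rw [hEdef]; dsimp only
      by_cases h : (κ : V d) = 0
      · have e1 : κ = κ₀ := Subtype.ext h
        simp only [if_pos e1, if_pos h]
      · have e1 : κ ≠ κ₀ := fun e => h (by rw [e])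
        simp only [if_neg e1, if_neg h]
    rw [tsum_congr h2] at h1
    have hκ0v : Real.exp (-αU * ‖((κ₀ : ↥Λ) : V d)‖) = 1 := by
      rw [show ((κ₀ : ↥Λ) : V d) = (0 : V d) from rfl]; simp
    rw [hκ0v] at h1
    rw [hSm'def, hSval, h1]; ring
  set e0 : ↥G → ℝ := fun g => if (g : V d) = 0 then 0 else Real.exp (-αU * ‖(g : V d)‖)
    with he0def
  set incl : ↥G → ↥Λ := fun g => ⟨(g : V d), hGΛ _ g.2⟩ with hincl
  have hinclinj : Function.Injective incl := by
    intro a b h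
    simp only [hincl, Subtype.mk.injEq] at h
    exact Subtype.ext h
  have he0E : ∀ g : ↥G, e0 g = E (incl g) := fun g => rfl
  have he0sum : Summable e0 := by
    have := hEsum.comp_injective hinclinj
    exact this.congr fun g => (he0E g).symm
  have he0nn : ∀ g : ↥G, 0 ≤ e0 g := by
    intro g; rw [he0def]; dsimp only; split <;> positivity
  have hEnn : ∀ κ : ↥Λ, 0 ≤ E κ := by
    intro κ; rw [hEdef]; dsimp only; split <;> positivity
  have he0le : (∑' g, e0 g) ≤ Sm' := by
    rw [← hEeq]
    exact Summable.tsum_le_tsum_of_inj incl hinclinj (fun c _ => hEnn c)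
      (fun g => le_of_eq (he0E g)) he0sum hEsum
  -- the off-diagonal interaction sum
  set u : ↥G → ℂ := fun h => if (h : V d) = 0 then 0 else U ((0 : V d) - (h : V d)) with hudef
  set T₁ : ℝ → ℂ := fun w => ∑' h : ↥G, u h * ψ w (h : V d) with hT₁def
  have hT₁sum : ∀ w, Summable fun h : ↥G => u h * ψ w (h : V d) := by
    intro w
    have h1 := (hTsummable w g₀).indicator {h : ↥G | ¬(h : V d) = 0}
    refine h1.congr fun h => ?_
    by_cases hh : (h : V d) = 0
    · simp [Set.indicator, hh, hudef]
    · simp [Set.indicator, hh, hudef, hg₀]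
  have hTsplit : ∀ w, T w g₀ = U 0 * ψ w (0 : V d) + T₁ w := by
    intro w
    have h1 := Summable.tsum_eq_add_tsum_ite (hTsummable w g₀) g₀
    have h2 : ∀ h : ↥G,
        (if h = g₀ then 0 else U (((g₀ : ↥G) : V d) - (h : V d)) * ψ w (h : V d))
          = u h * ψ w (h : V d) := by
      intro h
      rw [hudef]; dsimp only
      by_cases hh : (h : V d) = 0
      · have e1 : h = g₀ := Subtype.ext hh
        simp only [if_pos e1, if_pos hh, zero_mul]
      · have e1 : h ≠ g₀ := fun e => hh (by rw [e])
        simp only [if_neg e1, if_neg hh]; rfl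
    rw [tsum_congr h2] at h1
    have h3 : U (((g₀ : ↥G) : V d) - ((g₀ : ↥G) : V d)) = U 0 := by
      rw [sub_self]
    simp only [hTdef, hT₁def]
    rw [h1, h3]
  have hT₁bd : ∀ (w : ℝ) (B : ℝ), 0 ≤ B → (∀ h : ↥G, (h : V d) ≠ 0 → ‖ψ w (h : V d)‖ ≤ B) →
      ‖T₁ w‖ ≤ CU * Sm' * B := by
    intro w B hB hbd
    have hub : ∀ h : ↥G, ‖u h * ψ w (h : V d)‖ ≤ CU * B * e0 h := by
      intro h
      by_cases hh : (h : V d) = 0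
      · rw [hudef, he0def]; dsimp only; rw [if_pos hh, if_pos hh, zero_mul, norm_zero, mul_zero]
      · have h1 : ‖u h‖ ≤ CU * Real.exp (-αU * ‖(h : V d)‖) := by
          rw [hudef]; dsimp only; rw [if_neg hh]
          have hm : (0 : V d) - (h : V d) ∈ Λ := by
            rw [zero_sub]; exact lattice_neg_mem hΛ (hGΛ _ h.2)
          have h2 := hUbd _ hm
          rw [zero_sub, norm_neg] at h2
          rw [zero_sub]
          exact h2
        have he0v : e0 h = Real.exp (-αU * ‖(h : V d)‖) := by
          rw [he0def]; dsimp only; rw [if_neg hh]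
        rw [norm_mul, he0v]
        calc ‖u h‖ * ‖ψ w (h : V d)‖
            ≤ (CU * Real.exp (-αU * ‖(h : V d)‖)) * B :=
            mul_le_mul h1 (hbd h hh) (norm_nonneg _) (by positivity)
          _ = CU * B * Real.exp (-αU * ‖(h : V d)‖) := by ring
    have hsn : Summable fun h : ↥G => ‖u h * ψ w (h : V d)‖ :=
      Summable.of_nonneg_of_le (fun _ => norm_nonneg _) hub (he0sum.mul_left _)
    calc ‖T₁ w‖ ≤ ∑' h, ‖u h * ψ w (h : V d)‖ := by
          rw [hT₁def]; exact norm_tsum_le_tsum_norm hsn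
      _ ≤ ∑' h, CU * B * e0 h := Summable.tsum_le_tsum hub hsn (he0sum.mul_left _)
      _ = CU * B * ∑' h, e0 h := tsum_mul_left
      _ ≤ CU * B * Sm' := mul_le_mul_of_nonneg_left he0le (by positivity)
      _ = CU * Sm' * B := by ring
  -- derivative of the zeroth beam
  set E0 : ℝ → ℂ := fun w =>
    ((π / ρ₀ : ℝ) : ℂ) * (Complex.I * (U 0 * ψ w (0 : V d) + T₁ w)) with hE0def
  have hψ0d : ∀ w, HasDerivAt (fun t => ψ t (0 : V d)) (E0 w) w := by
    intro w
    have h1 := hderiv w g₀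
    have h2 : D w g₀ = E0 w := by
      rw [hDdef, hE0def]
      dsimp only
      rw [hρ00, hσ0, hTsplit w]
      push_cast
      ring
    rwa [h2] at h1
  have hU0c : ((U 0).re : ℂ) = U 0 := by
    have h := hUsym 0 h0Λ
    rw [neg_zero] at h
    exact Complex.conj_eq_iff_re.mp h.symm
  -- the tail quantity Q
  set Q : ℝ → ℝ := fun w => ρ₀ - ρ₀ * ‖ψ w (0 : V d)‖ ^ 2 with hQdef
  have hQnn : ∀ w, 0 ≤ Q w := by
    intro w; rw [hQdef]; dsimp only; linarith [hψ0sq w]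
  have hQ0 : Q 0 = 0 := by rw [hQdef]; dsimp only; rw [hψ00]; norm_num
  have hQle : ∀ w, Q w ≤ ρ₀ := by
    intro w; rw [hQdef]; dsimp only
    nlinarith [norm_nonneg (ψ w (0 : V d)), hk.le, sq_nonneg ‖ψ w (0 : V d)‖]
  have htailsum : ∀ w, Summable fun g : ↥G =>
      (if g = g₀ then 0 else rho k₀ ν (g : V d) * ‖ψ w (g : V d)‖ ^ 2) := by
    intro w
    refine Summable.of_nonneg_of_le (fun g => ?_) (fun g => ?_) (hMem w)
    · split
      · exact le_rfl
      · exact mul_nonneg (hρpos g).le (by positivity)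
    · split
      · exact mul_nonneg (hρpos g).le (by positivity)
      · exact le_rfl
  have htail : ∀ w, (∑' g : ↥G,
      (if g = g₀ then 0 else rho k₀ ν (g : V d) * ‖ψ w (g : V d)‖ ^ 2)) = Q w := by
    intro w
    have h1 := Summable.tsum_eq_add_tsum_ite (hMem w) g₀
    rw [hcons w] at h1
    have h2 : rho k₀ ν ((g₀ : ↥G) : V d) * ‖ψ w ((g₀ : ↥G) : V d)‖ ^ 2
        = ρ₀ * ‖ψ w (0 : V d)‖ ^ 2 := by
      rw [show ((g₀ : ↥G) : V d) = (0 : V d) from rfl, hρ00]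
    rw [h2] at h1
    rw [hQdef]
    dsimp only
    linarith
  have hψtail : ∀ (w : ℝ) (h : ↥G), (h : V d) ≠ 0 →
      ‖ψ w (h : V d)‖ ≤ Real.sqrt (Q w / (γ * ρ₀)) := by
    intro w h hne
    have h1 : rho k₀ ν (h : V d) * ‖ψ w (h : V d)‖ ^ 2 ≤ Q w := by
      rw [← htail w]
      have h2 := Summable.le_tsum (htailsum w) h (fun j _ => by
        split
        · exact le_rfl
        · exact mul_nonneg (hρpos j).le (by positivity))
      rwa [if_neg (fun e => hne (by rw [e]))] at h2
    have hγρ : (0 : ℝ) < γ * ρ₀ := by positivity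
    have h3 : ‖ψ w (h : V d)‖ ^ 2 ≤ Q w / (γ * ρ₀) := by
      rw [le_div_iff₀ hγρ]
      have h4 : γ * ρ₀ ≤ rho k₀ ν (h : V d) := (hG h.2).2
      nlinarith [sq_nonneg ‖ψ w (h : V d)‖]
    calc ‖ψ w (h : V d)‖ = Real.sqrt (‖ψ w (h : V d)‖ ^ 2) :=
          (Real.sqrt_sq (norm_nonneg _)).symm
      _ ≤ _ := Real.sqrt_le_sqrt h3
  -- derivative of Q
  have hnormsq_re : ∀ (a : ℂ), (inner ℂ a a : ℂ).re = ‖a‖ ^ 2 := by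
    intro a
    rw [RCLike.inner_apply', mul_comm, Complex.mul_conj, Complex.ofReal_re,
      Complex.normSq_eq_norm_sq]
  set Q' : ℝ → ℝ := fun w =>
    -(ρ₀ * ((inner ℂ (ψ w (0 : V d)) (E0 w) : ℂ) + (inner ℂ (E0 w) (ψ w (0 : V d)) : ℂ)).re)
    with hQ'def
  have hQd : ∀ w, HasDerivAt Q (Q' w) w := by
    intro w
    have h1 : HasDerivAt (fun t => (inner ℂ (ψ t (0 : V d)) (ψ t (0 : V d)) : ℂ))
        ((inner ℂ (ψ w (0 : V d)) (E0 w) : ℂ) + (inner ℂ (E0 w) (ψ w (0 : V d)) : ℂ)) w :=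
      HasDerivAt.inner ℂ (hψ0d w) (hψ0d w)
    have h2 := Complex.reCLM.hasFDerivAt.comp_hasDerivAt w h1
    have h2' : HasDerivAt (fun t => (inner ℂ (ψ t (0 : V d)) (ψ t (0 : V d)) : ℂ).re)
        (((inner ℂ (ψ w (0 : V d)) (E0 w) : ℂ) + (inner ℂ (E0 w) (ψ w (0 : V d)) : ℂ)).re) w := h2
    have h3 := (h2'.const_mul ρ₀).const_sub ρ₀
    have h4 : (fun t => ρ₀ - ρ₀ * (inner ℂ (ψ t (0 : V d)) (ψ t (0 : V d)) : ℂ).re) = Q := by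
      funext t
      rw [hQdef]; dsimp only; rw [hnormsq_re]
    rw [h4] at h3
    rw [hQ'def]; dsimp only
    exact h3
  set K : ℝ := π * CU * Sm' / Real.sqrt (γ * ρ₀) with hKdef
  have hπ0 : (0 : ℝ) < π := Real.pi_pos
  have hK0 : 0 ≤ K := by rw [hKdef]; positivity
  have hQ'bd : ∀ w, |Q' w| ≤ 2 * K * Real.sqrt (Q w) := by
    intro w
    set X : ℂ := (inner ℂ (ψ w (0 : V d)) (E0 w) : ℂ) with hXdef
    have hsym : (inner ℂ (E0 w) (ψ w (0 : V d)) : ℂ) = starRingEnd ℂ X :=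
      (inner_conj_symm _ _).symm
    have hre2 : (X + starRingEnd ℂ X).re = 2 * X.re := by
      rw [Complex.add_re, Complex.conj_re]; ring
    have hXre : X.re = (π / ρ₀) * (Complex.I * (starRingEnd ℂ (ψ w (0 : V d)) * T₁ w)).re := by
      rw [hXdef, RCLike.inner_apply', hE0def]
      dsimp only
      rw [← hU0c]
      exact quad_re_helper _ _ _ _
    have hT₁n : ‖T₁ w‖ ≤ CU * Sm' * Real.sqrt (Q w / (γ * ρ₀)) :=
      hT₁bd w _ (Real.sqrt_nonneg _) (fun h hh => hψtail w h hh)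
    have hIre : |(Complex.I * (starRingEnd ℂ (ψ w (0 : V d)) * T₁ w)).re|
        ≤ ‖T₁ w‖ := by
      calc |(Complex.I * (starRingEnd ℂ (ψ w (0 : V d)) * T₁ w)).re|
          ≤ ‖Complex.I * (starRingEnd ℂ (ψ w (0 : V d)) * T₁ w)‖ :=
            Complex.abs_re_le_norm _
        _ = ‖ψ w (0 : V d)‖ * ‖T₁ w‖ := by
            rw [norm_mul, Complex.norm_I, one_mul, norm_mul, RingHomIsometric.norm_map]
        _ ≤ 1 * ‖T₁ w‖ := mul_le_mul_of_nonneg_right (hψ0le w) (norm_nonneg _)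
        _ = ‖T₁ w‖ := one_mul _
    have hsq : Real.sqrt (Q w / (γ * ρ₀)) = Real.sqrt (Q w) / Real.sqrt (γ * ρ₀) :=
      Real.sqrt_div (hQnn w) _
    have hXbd : |X.re| ≤ (π / ρ₀) * (CU * Sm' * (Real.sqrt (Q w) / Real.sqrt (γ * ρ₀))) := by
      rw [hXre, abs_mul, abs_of_nonneg (by positivity : (0:ℝ) ≤ π / ρ₀)]
      refine mul_le_mul_of_nonneg_left ?_ (by positivity)
      calc |(Complex.I * (starRingEnd ℂ (ψ w (0 : V d)) * T₁ w)).re| ≤ ‖T₁ w‖ := hIre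
        _ ≤ CU * Sm' * Real.sqrt (Q w / (γ * ρ₀)) := hT₁n
        _ = CU * Sm' * (Real.sqrt (Q w) / Real.sqrt (γ * ρ₀)) := by rw [hsq]
    have hQ'eq : Q' w = -(ρ₀ * (2 * X.re)) := by
      rw [hQ'def]; dsimp only; rw [← hXdef, hsym, hre2]
    rw [hQ'eq, abs_neg, abs_mul, abs_mul, abs_of_nonneg hk.le, abs_of_nonneg (by norm_num : (0:ℝ) ≤ 2)]
    calc ρ₀ * (2 * |X.re|) ≤ ρ₀ * (2 * ((π / ρ₀) * (CU * Sm' * (Real.sqrt (Q w) / Real.sqrt (γ * ρ₀))))) := by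
          refine mul_le_mul_of_nonneg_left ?_ hk.le
          exact mul_le_mul_of_nonneg_left hXbd (by norm_num)
      _ = 2 * K * Real.sqrt (Q w) := by
          rw [hKdef]
          field_simp
  have hsqQ : Real.sqrt (Q z) ≤ K * |z| := sqrt_bound_of_deriv hK0 hQd hQ0 hQnn hQ'bd z
  -- identification of normOn with √Q
  have hnormOn : normOn k₀ ν (G \ {0}) (ψ z) = Real.sqrt (Q z) := by
    unfold normOn
    rw [← htail z]
    congr 1
    set f : ↥G → ℝ := fun g =>
      (if g = g₀ then 0 else rho k₀ ν (g : V d) * ‖ψ z (g : V d)‖ ^ 2) with hfdef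
    set i : ↥(G \ {0}) → ↥G := fun g => ⟨g.1, g.2.1⟩ with hidef
    have hiinj : Function.Injective i := by
      intro a b h
      simp only [hidef, Subtype.mk.injEq] at h
      exact Subtype.ext h
    have hsupp : Function.support f ⊆ Set.range i := by
      intro x hx
      have hxne : x ≠ g₀ := by
        intro e
        apply hx
        rw [hfdef]; dsimp only; rw [if_pos e]
      have hxv : (x : V d) ∈ G \ {0} := by
        refine ⟨x.2, ?_⟩
        intro hmem
        apply hxne
        exact Subtype.ext hmem
      exact ⟨⟨(x : V d), hxv⟩, rfl⟩
    have heq := hiinj.tsum_eq (f := f) hsupp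
    rw [← heq]
    refine tsum_congr fun g => ?_
    rw [hfdef]; dsimp only
    rw [if_neg (fun e => g.2.2 (by rw [show ((g:↥(G \ {0})) : V d) = ((i g : ↥G) : V d) from rfl, e]; rfl))]
  -- conclusion, part 2
  set N : ℝ := π * CU * Sm' / (γ * ρ₀) with hNdef
  have hsγ : Real.sqrt γ * Real.sqrt γ = γ := Real.mul_self_sqrt hγ0.le
  have hsρ : Real.sqrt ρ₀ * Real.sqrt ρ₀ = ρ₀ := Real.mul_self_sqrt hk.le
  have hγsle : γ ≤ Real.sqrt γ := by
    nlinarith [Real.sqrt_nonneg γ, Real.sqrt_le_one.mpr hγ1.le, Real.sq_sqrt hγ0.le]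
  have hKN : K ≤ N * Real.sqrt ρ₀ := by
    rw [hKdef, hNdef, Real.sqrt_mul hγ0.le]
    rw [div_le_iff₀ (by positivity), div_mul_eq_mul_div, div_mul_eq_mul_div,
      le_div_iff₀ (by positivity)]
    have hsρ0 : 0 < Real.sqrt ρ₀ := Real.sqrt_pos.mpr hk
    have hsγ0 : 0 < Real.sqrt γ := Real.sqrt_pos.mpr hγ0
    calc π * CU * Sm' * (γ * ρ₀) = (π * CU * Sm' * ρ₀) * γ := by ring
      _ ≤ (π * CU * Sm' * ρ₀) * Real.sqrt γ :=
          mul_le_mul_of_nonneg_left hγsle (by positivity)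
      _ = π * CU * Sm' * Real.sqrt ρ₀ * (Real.sqrt γ * Real.sqrt ρ₀) := by
          linear_combination (-(π * CU * Sm' * Real.sqrt γ)) * hsρ
  have hc2 : normOn k₀ ν (G \ {0}) (ψ z) ≤ min (N * |z|) 1 * Real.sqrt ρ₀ := by
    rw [hnormOn]
    rcases min_cases (N * |z|) 1 with ⟨hm, _⟩ | ⟨hm, _⟩ <;> rw [hm]
    · calc Real.sqrt (Q z) ≤ K * |z| := hsqQ
        _ ≤ N * Real.sqrt ρ₀ * |z| := mul_le_mul_of_nonneg_right hKN (abs_nonneg z)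
        _ = N * |z| * Real.sqrt ρ₀ := by ring
    · rw [one_mul]
      exact Real.sqrt_le_sqrt (hQle z)
  -- conclusion, part 1
  set c : ℂ := Complex.I * (π : ℂ) * U 0 / ((ρ₀ : ℝ) : ℂ) with hcdef
  have hρ₀c : ((ρ₀ : ℝ) : ℂ) ≠ 0 := Complex.ofReal_ne_zero.mpr hk.ne'
  have hgoal_arg : Complex.I * (π : ℂ) * U 0 * (z : ℂ) / ((ρ₀ : ℝ) : ℂ) = c * z := by
    rw [hcdef]; ring
  set ζ : ℝ → ℂ := fun w => Complex.exp (-(c * w)) * ψ w (0 : V d) with hζdef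
  have hexp_d : ∀ w : ℝ, HasDerivAt (fun t : ℝ => Complex.exp (-(c * t)))
      (Complex.exp (-(c * w)) * -c) w := by
    intro w
    have h2 : HasDerivAt (fun t : ℝ => (t : ℂ)) 1 w := by
      exact Complex.ofRealCLM.hasDerivAt (x := w)
    have h1 : HasDerivAt (fun t : ℝ => -(c * (t : ℂ))) (-c) w := by
      have h3 := (h2.const_mul c).neg; rw [mul_one] at h3; exact h3
    simpa using h1.cexp
  have hζd : ∀ w : ℝ, HasDerivAt ζ
      (Complex.exp (-(c * (w:ℂ))) * (((π / ρ₀ : ℝ) : ℂ) * (Complex.I * T₁ w))) w := by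
    intro w
    have h1 := (hexp_d w).mul (hψ0d w)
    have h2 : Complex.exp (-(c * (w:ℂ))) * -c * ψ w (0 : V d) + Complex.exp (-(c * (w:ℂ))) * E0 w
        = Complex.exp (-(c * (w:ℂ))) * (((π / ρ₀ : ℝ) : ℂ) * (Complex.I * T₁ w)) := by
      rw [hE0def, hcdef]
      dsimp only
      push_cast
      field_simp
      ring
    rw [h2] at h1
    exact h1
  have hcI : c = Complex.I * ((π * (U 0).re / ρ₀ : ℝ) : ℂ) := by
    rw [hcdef, ← hU0c]; push_cast; rw [Complex.ofReal_re]; ring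
  have hcre : ∀ w : ℝ, (c * (w : ℂ)).re = 0 := by
    intro w
    rw [hcI]
    simp [Complex.mul_re, Complex.mul_im]
  have hexpnorm : ∀ t : ℂ, t.re = 0 → ‖Complex.exp t‖ = 1 := by
    intro t ht
    rw [Complex.norm_exp, ht, Real.exp_zero]
  set M : ℝ := π / ρ₀ * (CU * Sm' * (Real.sqrt γ)⁻¹) with hMdef
  have hζbd : ∀ w : ℝ, ‖Complex.exp (-(c * (w:ℂ))) * (((π / ρ₀ : ℝ) : ℂ) * (Complex.I * T₁ w))‖
      ≤ M := by
    intro w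
    have he1 : ‖Complex.exp (-(c * (w:ℂ)))‖ = 1 := by
      apply hexpnorm
      rw [Complex.neg_re, hcre w, neg_zero]
    rw [norm_mul, he1, one_mul, norm_mul, norm_mul, Complex.norm_I, one_mul,
      Complex.norm_real, Real.norm_eq_abs, abs_of_nonneg (by positivity : (0:ℝ) ≤ π / ρ₀)]
    have hb := hT₁bd w ((Real.sqrt γ)⁻¹) (by positivity) (fun h _ => hψleγ w h)
    rw [hMdef]
    exact mul_le_mul_of_nonneg_left hb (by positivity)
  have hζ0 : ζ 0 = 1 := by
    rw [hζdef]; dsimp only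
    rw [hψ00]
    push_cast
    simp
  have hmv := norm_sub_le_of_deriv_bound hζd hζbd z
  rw [hζ0] at hmv
  have hMN : M ≤ N := by
    have hsγ0 : 0 < Real.sqrt γ := Real.sqrt_pos.mpr hγ0
    have hM' : M = π * CU * Sm' / (ρ₀ * Real.sqrt γ) := by
      rw [hMdef]; field_simp
    rw [hM', hNdef, div_le_div_iff₀ (by positivity) (by positivity)]
    calc π * CU * Sm' * (γ * ρ₀) = (π * CU * Sm' * ρ₀) * γ := by ring
      _ ≤ (π * CU * Sm' * ρ₀) * Real.sqrt γ :=
          mul_le_mul_of_nonneg_left hγsle (by positivity)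
      _ = π * CU * Sm' * (ρ₀ * Real.sqrt γ) := by ring
  have hfac : Complex.exp (c * z) - ψ z 0 = Complex.exp (c * z) * (1 - ζ z) := by
    rw [hζdef]; dsimp only
    rw [mul_sub, mul_one, ← mul_assoc, ← Complex.exp_add]
    simp
  constructor
  · rw [hgoal_arg, hfac, norm_mul, hexpnorm _ (hcre z), one_mul]
    refine le_min ?_ ?_
    · have h1 : ‖(1 : ℂ) - ζ z‖ = ‖ζ z - 1‖ := norm_sub_rev _ _
      rw [h1]
      calc ‖ζ z - 1‖ ≤ M * |z| := hmv
        _ ≤ N * |z| := mul_le_mul_of_nonneg_right hMN (abs_nonneg z)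
    · have h1 : ‖ζ z‖ ≤ 1 := by
        rw [hζdef]; dsimp only
        rw [norm_mul]
        have he1 : ‖Complex.exp (-(c * z))‖ = 1 := by
          apply hexpnorm
          rw [Complex.neg_re, hcre z, neg_zero]
        rw [he1, one_mul]
        exact hψ0le z
      calc ‖(1 : ℂ) - ζ z‖ ≤ ‖(1 : ℂ)‖ + ‖ζ z‖ := norm_sub_le _ _
        _ ≤ 2 := by rw [norm_one]; linarith
  · exact hc2
end
end

section
/- Let ρ₀ > 0, U₀ ∈ ℝ, and Û ∈ ℂ. Let (ψ₀, ψ₁) : ℝ → ℂ² be the unique differentiable solution of the two-beam system (ρ₀/π)·ψ₀′(z) = i·(U₀·ψ₀(z) + conj(Û)·ψ₁(z)), (ρ₀/π)·ψ₁′(z) = i·(Û·ψ₀(z) + U₀·ψ₁(z)) with initial conditions ψ₀(0) = 1 and ψ₁(0) = 0. Then for all z ∈ ℝ: |ψ₀(z)|² = cos²(π·|Û|·z/ρ₀) and |ψ₁(z)|² = sin²(π·|Û|·z/ρ₀). -/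
noncomputable section

open Real

/-- two-beam approximation, "pendellösung"/beating:
the solution of the two-beam system
`(ρ₀/π)ψ₀′ = i(U₀ψ₀ + conj(Û)ψ₁)`, `(ρ₀/π)ψ₁′ = i(Ûψ₀ + U₀ψ₁)` with
`ψ₀(0) = 1`, `ψ₁(0) = 0` satisfies `|ψ₀(z)|² = cos²(π|Û|z/ρ₀)` and
`|ψ₁(z)|² = sin²(π|Û|z/ρ₀)`. -/
theorem stmt11 (ρ₀ : ℝ) (hρ : 0 < ρ₀) (U₀ : ℝ) (Uh : ℂ)
    (ψ₀ ψ₁ : ℝ → ℂ)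
    (h₀ : ∀ z : ℝ, HasDerivAt ψ₀
      (((π / ρ₀ : ℝ) : ℂ) * (Complex.I * ((U₀ : ℂ) * ψ₀ z + (starRingEnd ℂ) Uh * ψ₁ z))) z)
    (h₁ : ∀ z : ℝ, HasDerivAt ψ₁
      (((π / ρ₀ : ℝ) : ℂ) * (Complex.I * (Uh * ψ₀ z + (U₀ : ℂ) * ψ₁ z))) z)
    (hi₀ : ψ₀ 0 = 1) (hi₁ : ψ₁ 0 = 0) :
    ∀ z : ℝ,
      ‖ψ₀ z‖ ^ 2 = Real.cos (π * ‖Uh‖ * z / ρ₀) ^ 2 ∧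
      ‖ψ₁ z‖ ^ 2 = Real.sin (π * ‖Uh‖ * z / ρ₀) ^ 2 := by
  set c : ℝ := π / ρ₀ with hc
  set ω : ℝ := c * ‖Uh‖ with hω
  -- unit phase e with conj Uh = ‖Uh‖ • e
  set e : ℂ := if Uh = 0 then 1 else (starRingEnd ℂ) Uh / (‖Uh‖ : ℂ) with he
  have hnorm_e : ‖e‖ = 1 := by
    rw [he]
    split_ifs with h
    · simp
    · rw [norm_div]
      simp only [RingHomIsometric.norm_map, Complex.norm_real, norm_norm]
      exact div_self (norm_ne_zero_iff.mpr h)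
  have hconjUh : (starRingEnd ℂ) Uh = (‖Uh‖ : ℂ) * e := by
    rw [he]
    split_ifs with h
    · simp [h]
    · rw [mul_div_cancel₀]
      exact_mod_cast norm_ne_zero_iff.mpr h
  have hUh : Uh = (‖Uh‖ : ℂ) * (starRingEnd ℂ) e := by
    have := congrArg (starRingEnd ℂ) hconjUh
    simpa using this
  have hee : e * (starRingEnd ℂ) e = 1 := by
    rw [Complex.mul_conj]
    norm_cast
    rw [Complex.normSq_eq_norm_sq, hnorm_e]; norm_num
  have hIe : (Complex.I * e) * (Complex.I * (starRingEnd ℂ) e) = -1 := by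
    rw [mul_mul_mul_comm, Complex.I_mul_I, hee, mul_one]
  -- gauge transformation
  set a : ℂ := -(Complex.I * c * U₀) with ha
  set E : ℝ → ℂ := fun z => Complex.exp (a * z) with hE
  set u : ℝ → ℂ := fun z => E z * ψ₀ z with hu
  set v : ℝ → ℂ := fun z => E z * ψ₁ z with hv
  have hEd : ∀ z : ℝ, HasDerivAt E (a * E z) z := by
    intro z
    have h1 : HasDerivAt (fun z : ℝ => (z:ℂ)) 1 z := Complex.ofRealCLM.hasDerivAt
    have := (h1.const_mul a).cexp
    simpa [hE, mul_comm] using this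
  have hEnorm : ∀ z : ℝ, ‖E z‖ = 1 := by
    intro z
    rw [hE, Complex.norm_exp]
    simp [ha]
  have hud : ∀ z : ℝ, HasDerivAt u (Complex.I * ω * e * v z) z := by
    intro z
    have : HasDerivAt (fun y => E y * ψ₀ y) _ z := (hEd z).mul (h₀ z)
    convert this using 1
    simp only [hv, hω, ha]
    push_cast
    linear_combination (-(Complex.I * (c:ℂ) * E z * ψ₁ z)) * hconjUh
  have hvd : ∀ z : ℝ, HasDerivAt v (Complex.I * ω * (starRingEnd ℂ) e * u z) z := by
    intro z
    have : HasDerivAt (fun y => E y * ψ₁ y) _ z := (hEd z).mul (h₁ z)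
    convert this using 1
    simp only [hu, hω, ha]
    push_cast
    linear_combination (-(Complex.I * (c:ℂ) * E z * ψ₀ z)) * hUh
  -- trig functions
  set C : ℝ → ℂ := fun z => ((Real.cos (ω * z) : ℝ) : ℂ) with hC
  set S : ℝ → ℂ := fun z => ((Real.sin (ω * z) : ℝ) : ℂ) with hS
  have hCd : ∀ z : ℝ, HasDerivAt C (-ω * S z) z := by
    intro z
    have h1 : HasDerivAt (fun z : ℝ => Real.cos (ω*z)) (-Real.sin (ω*z) * ω) z :=
      (Real.hasDerivAt_cos (ω*z)).comp z (by simpa using (hasDerivAt_id z).const_mul ω)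
    have := h1.ofReal_comp
    convert this using 1
    simp only [hS]; push_cast; ring
  have hSd : ∀ z : ℝ, HasDerivAt S ((ω : ℂ) * C z) z := by
    intro z
    have h1 : HasDerivAt (fun z : ℝ => Real.sin (ω*z)) (Real.cos (ω*z) * ω) z :=
      (Real.hasDerivAt_sin (ω*z)).comp z (by simpa using (hasDerivAt_id z).const_mul ω)
    have := h1.ofReal_comp
    convert this using 1
    simp only [hC]; push_cast; ring
  -- conserved quantities
  set s₁ : ℝ → ℂ := fun z => u z * C z - Complex.I * e * v z * S z with hs₁
  set s₂ : ℝ → ℂ := fun z => v z * C z - Complex.I * (starRingEnd ℂ) e * u z * S z with hs₂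
  have hs₁d : ∀ z : ℝ, HasDerivAt s₁ 0 z := by
    intro z
    have d : HasDerivAt (fun y => u y * C y - Complex.I * e * v y * S y) _ z := ((hud z).mul (hCd z)).sub (((hvd z).const_mul (Complex.I * e)).mul (hSd z))
    convert d using 1
    push_cast
    linear_combination ((ω:ℂ) * E z * ψ₀ z * S z) * hIe
  have hs₂d : ∀ z : ℝ, HasDerivAt s₂ 0 z := by
    intro z
    have d : HasDerivAt (fun y => v y * C y - Complex.I * (starRingEnd ℂ) e * u y * S y) _ z :=
      ((hvd z).mul (hCd z)).sub (((hud z).const_mul (Complex.I * (starRingEnd ℂ) e)).mul (hSd z))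
    convert d using 1
    push_cast
    linear_combination ((ω:ℂ) * E z * ψ₁ z * S z) * hIe
  have hs₁c : ∀ z : ℝ, s₁ z = 1 := by
    intro z
    have := is_const_of_deriv_eq_zero (f := s₁)
      (fun z => (hs₁d z).differentiableAt) (fun z => (hs₁d z).deriv) z 0
    rw [this]
    simp [hs₁, hu, hv, hE, hC, hS, hi₀, hi₁]
  have hs₂c : ∀ z : ℝ, s₂ z = 0 := by
    intro z
    have := is_const_of_deriv_eq_zero (f := s₂)
      (fun z => (hs₂d z).differentiableAt) (fun z => (hs₂d z).deriv) z 0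
    rw [this]
    simp [hs₂, hu, hv, hE, hC, hS, hi₀, hi₁]
  intro z
  have hpyth : C z ^ 2 + S z ^ 2 = 1 := by
    simp only [hC, hS]
    norm_cast
    rw [add_comm]
    exact Real.sin_sq_add_cos_sq (ω * z)
  have h1z := hs₁c z
  have h2z := hs₂c z
  simp only [hs₁, hs₂] at h1z h2z
  have huz : u z = C z := by
    linear_combination C z * h1z + Complex.I * e * S z * h2z + u z * (S z)^2 * hIe - u z * hpyth
  have hvz : v z = Complex.I * (starRingEnd ℂ) e * S z := by
    linear_combination Complex.I * (starRingEnd ℂ) e * S z * h1z + C z * h2z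
      + v z * (S z)^2 * hIe - v z * hpyth
  have harg : π * ‖Uh‖ * z / ρ₀ = ω * z := by rw [hω, hc]; ring
  constructor
  · have : ‖ψ₀ z‖ = ‖u z‖ := by
      rw [hu]; simp [norm_mul, hEnorm z]
    rw [this, huz, harg, hC]
    rw [Complex.norm_real, Real.norm_eq_abs, sq_abs]
  · have : ‖ψ₁ z‖ = ‖v z‖ := by
      rw [hv]; simp [norm_mul, hEnorm z]
    rw [this, hvz, harg, hS]
    simp only [norm_mul, Complex.norm_I, RingHomIsometric.norm_map, hnorm_e, Complex.norm_real,
      one_mul]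
    rw [Real.norm_eq_abs, sq_abs]
end
end
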